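/- arXiv:2112.09162 — 4 statements merged into one kernel-verified Lean document; each statement's English description precedes it below -/
import Mathlib

section
/- Let c₀ > 0 and let ν be a probability density on [-1,1] with ν(λ) ≥ c₀ for all λ ∈ [-1,1]. Let x₁, x₂, … be any sequence of real numbers in [-1,1] and define the mixture-method wealth K_n = ∫_{-1}^{1} ∏_{t=1}^{n} (1 + λ x_t) ν(λ) dλ. Then: (i) for every λ_max ∈ (0,1) and every Δλ with 0 < Δλ < 1 − λ_max, K_n ≥ exp( n · max_{λ ∈ [−λ_max, λ_max]} (1/n) Σ_{t=1}^n log(1 + λ x_t) − nΔλ/(1 − λ_max − Δλ) − log(1/(c₀ Δλ)) ); and (ii) for every n ≥ 4, K_n ≥ exp( (n/8) ((1/n) Σ_{t=1}^n x_t)² − 4 − log(n/c₀) ). -/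
open MeasureTheory Finset

private lemma log_ge_aux (u : ℝ) (hu : -(1/2) ≤ u) : u - 2*u^2 ≤ Real.log (1+u) := by
  have h1 : (0:ℝ) < 1 + u := by linarith
  have h2 : (0:ℝ) < 1/(1+u) := by positivity
  have h3 := Real.log_le_sub_one_of_pos h2
  rw [one_div, Real.log_inv] at h3
  have h4 : 1/(1+u) ≤ 1 - u + 2*u^2 := by
    rw [div_le_iff₀ h1]; nlinarith [sq_nonneg u]
  have h5 : (1+u)⁻¹ = 1/(1+u) := (one_div _).symm
  linarith [h4, h3]

private lemma log_diff_aux (l₀ l Δ m xt : ℝ) (hΔ : 0 < Δ) (hl₀ : |l₀| ≤ m) (hmΔ : m + Δ < 1)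
    (ha : l₀ ≤ l) (hb : l ≤ l₀ + Δ) (hx1 : -1 ≤ xt) (hx2 : xt ≤ 1) :
    Real.log (1 + l₀ * xt) - Δ / (1 - m - Δ) ≤ Real.log (1 + l * xt) := by
  have habs := abs_le.1 hl₀
  have hD : (0:ℝ) < 1 - m - Δ := by linarith
  have h1 : (0:ℝ) < 1 + l * xt := by nlinarith
  have h2 : (0:ℝ) < 1 + l₀ * xt := by nlinarith
  have step := Real.log_le_sub_one_of_pos (div_pos h2 h1)
  rw [Real.log_div h2.ne' h1.ne'] at step
  have key : (1 + l₀*xt)/(1 + l*xt) - 1 ≤ Δ / (1 - m - Δ) := by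
    rw [div_sub_one h1.ne', div_le_div_iff₀ h1 hD]
    have hs : (l₀ - l)*xt ≤ Δ := by nlinarith
    have hd : 1 - m - Δ ≤ 1 + l*xt := by nlinarith
    nlinarith [mul_le_mul_of_nonneg_right hs hD.le, mul_le_mul_of_nonneg_left hd hΔ.le]
  linarith

/-- lower bounds on the mixture-method wealth
`K n = ∫_{-1}^1 ∏_{t=1}^n (1 + λ x_t) ν(λ) dλ`. -/
theorem stmt_0
    (c₀ : ℝ) (hc₀ : 0 < c₀)
    (ν : ℝ → ℝ)
    (hν_lb : ∀ l ∈ Set.Icc (-1 : ℝ) 1, c₀ ≤ ν l)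
    (hν_prob : ∫ l in Set.Icc (-1 : ℝ) 1, ν l = 1)
    (x : ℕ → ℝ) (hx : ∀ t, x t ∈ Set.Icc (-1 : ℝ) 1)
    (K : ℕ → ℝ)
    (hK : ∀ n, K n =
      ∫ l in Set.Icc (-1 : ℝ) 1, (∏ t ∈ Finset.Icc 1 n, (1 + l * x t)) * ν l) :
    -- (i)
    (∀ lmax ∈ Set.Ioo (0 : ℝ) 1, ∀ Δ : ℝ, 0 < Δ → Δ < 1 - lmax → ∀ n : ℕ,
      K n ≥ Real.exp
        ((n : ℝ) * (⨆ l : Set.Icc (-lmax) lmax,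
            (1 / (n : ℝ)) * ∑ t ∈ Finset.Icc 1 n, Real.log (1 + (l : ℝ) * x t))
          - (n : ℝ) * Δ / (1 - lmax - Δ)
          - Real.log (1 / (c₀ * Δ)))) ∧
    -- (ii)
    (∀ n : ℕ, 4 ≤ n →
      K n ≥ Real.exp
        (((n : ℝ) / 8) * ((1 / (n : ℝ)) * ∑ t ∈ Finset.Icc 1 n, x t) ^ 2
          - 4 - Real.log ((n : ℝ) / c₀))) := by
  -- ν is integrable on [-1,1]
  have hνint : IntegrableOn ν (Set.Icc (-1:ℝ) 1) := by
    by_contra h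
    rw [MeasureTheory.integral_undef h] at hν_prob
    norm_num at hν_prob
  -- the integrand is integrable on [-1,1]
  have hfint : ∀ n : ℕ, IntegrableOn
      (fun l => (∏ t ∈ Finset.Icc 1 n, (1 + l * x t)) * ν l) (Set.Icc (-1:ℝ) 1) := by
    intro n
    apply MeasureTheory.Integrable.bdd_mul (c := 2 ^ (Finset.Icc 1 n).card) hνint
    · exact (continuous_finset_prod _ fun t _ => by fun_prop).aestronglyMeasurable
    · refine (MeasureTheory.ae_restrict_iff' measurableSet_Icc).2 (Filter.Eventually.of_forall ?_)
      intro l hl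
      rw [Real.norm_eq_abs, Finset.abs_prod]
      calc ∏ t ∈ Finset.Icc 1 n, |1 + l * x t| ≤ ∏ t ∈ Finset.Icc 1 n, 2 := by
            refine Finset.prod_le_prod (fun t _ => abs_nonneg _) (fun t _ => ?_)
            obtain ⟨h1, h2⟩ := hx t
            obtain ⟨h3, h4⟩ := hl
            rw [abs_le]; constructor <;> nlinarith
        _ = 2 ^ (Finset.Icc 1 n).card := Finset.prod_const 2
  -- core lower bound
  have key : ∀ (n : ℕ) (l₀ Δ m : ℝ), 0 < Δ → |l₀| ≤ m → m + Δ < 1 →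
      c₀ * Δ * Real.exp ((∑ t ∈ Finset.Icc 1 n, Real.log (1 + l₀ * x t))
        - n * Δ / (1 - m - Δ)) ≤ K n := by
    intro n l₀ Δ m hΔ hl₀ hmΔ
    have habs := abs_le.1 hl₀
    have hm : 0 ≤ m := (abs_nonneg l₀).trans hl₀
    have hD : (0:ℝ) < 1 - m - Δ := by linarith
    set I : Set ℝ := Set.Icc l₀ (l₀ + Δ) with hI
    have hIsub : I ⊆ Set.Icc (-1:ℝ) 1 := by
      intro l hl
      obtain ⟨h1, h2⟩ := hl
      constructor <;> nlinarith
    set E : ℝ := Real.exp ((∑ t ∈ Finset.Icc 1 n, Real.log (1 + l₀ * x t))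
        - n * Δ / (1 - m - Δ)) with hE
    -- pointwise bound on I
    have hpt : ∀ l ∈ I, c₀ * E ≤ (∏ t ∈ Finset.Icc 1 n, (1 + l * x t)) * ν l := by
      intro l hl
      obtain ⟨ha, hb⟩ := hl
      have hlpos : ∀ t, (0:ℝ) < 1 + l * x t := by
        intro t
        obtain ⟨h1, h2⟩ := hx t
        nlinarith
      have hprod : (∏ t ∈ Finset.Icc 1 n, (1 + l * x t))
          = Real.exp (∑ t ∈ Finset.Icc 1 n, Real.log (1 + l * x t)) := by
        rw [Real.exp_sum]
        exact Finset.prod_congr rfl fun t _ => (Real.exp_log (hlpos t)).symm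
      have hsum : (∑ t ∈ Finset.Icc 1 n, Real.log (1 + l₀ * x t)) - n * Δ / (1 - m - Δ)
          ≤ ∑ t ∈ Finset.Icc 1 n, Real.log (1 + l * x t) := by
        have h1 : ∀ t ∈ Finset.Icc 1 n,
            Real.log (1 + l₀ * x t) - Δ / (1 - m - Δ) ≤ Real.log (1 + l * x t) :=
          fun t _ => log_diff_aux l₀ l Δ m (x t) hΔ hl₀ hmΔ ha hb (hx t).1 (hx t).2
        have h2 := Finset.sum_le_sum h1
        rw [Finset.sum_sub_distrib, Finset.sum_const, Nat.card_Icc] at h2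
        simp only [Nat.add_sub_cancel, nsmul_eq_mul] at h2
        calc (∑ t ∈ Finset.Icc 1 n, Real.log (1 + l₀ * x t)) - n * Δ / (1 - m - Δ)
            = (∑ t ∈ Finset.Icc 1 n, Real.log (1 + l₀ * x t)) - n * (Δ / (1 - m - Δ)) := by
              ring
          _ ≤ _ := h2
      have hE' : E ≤ ∏ t ∈ Finset.Icc 1 n, (1 + l * x t) := by
        rw [hprod, hE]; exact Real.exp_le_exp.2 hsum
      have hν' : c₀ ≤ ν l := hν_lb l (hIsub ⟨ha, hb⟩)
      have hEpos : 0 < E := Real.exp_pos _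
      calc c₀ * E ≤ c₀ * ∏ t ∈ Finset.Icc 1 n, (1 + l * x t) :=
            mul_le_mul_of_nonneg_left hE' hc₀.le
        _ = (∏ t ∈ Finset.Icc 1 n, (1 + l * x t)) * c₀ := mul_comm _ _
        _ ≤ (∏ t ∈ Finset.Icc 1 n, (1 + l * x t)) * ν l :=
            mul_le_mul_of_nonneg_left hν' (hEpos.le.trans hE')
    -- integrate
    have hmeasI : MeasurableSet I := measurableSet_Icc
    have hstep1 : c₀ * Δ * E = ∫ _ in I, (c₀ * E) := by
      rw [setIntegral_const, Real.volume_real_Icc_of_le (by linarith : l₀ ≤ l₀ + Δ), smul_eq_mul]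
      ring
    have hstep2 : (∫ _ in I, (c₀ * E))
        ≤ ∫ l in I, (∏ t ∈ Finset.Icc 1 n, (1 + l * x t)) * ν l := by
      refine setIntegral_mono_on ((integrableOn_const_iff).2 (Or.inr ?_)) ((hfint n).mono_set hIsub)
        hmeasI hpt
      rw [Real.volume_Icc]; exact ENNReal.ofReal_lt_top
    have hstep3 : (∫ l in I, (∏ t ∈ Finset.Icc 1 n, (1 + l * x t)) * ν l)
        ≤ ∫ l in Set.Icc (-1:ℝ) 1, (∏ t ∈ Finset.Icc 1 n, (1 + l * x t)) * ν l := by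
      refine setIntegral_mono_set (hfint n) ?_ (HasSubset.Subset.eventuallyLE hIsub)
      refine (MeasureTheory.ae_restrict_iff' measurableSet_Icc).2 (Filter.Eventually.of_forall ?_)
      intro l hl
      have hν' : c₀ ≤ ν l := hν_lb l hl
      have hprodnn : 0 ≤ ∏ t ∈ Finset.Icc 1 n, (1 + l * x t) := by
        refine Finset.prod_nonneg fun t _ => ?_
        obtain ⟨h1, h2⟩ := hx t
        obtain ⟨h3, h4⟩ := hl
        nlinarith
      exact mul_nonneg hprodnn (hc₀.le.trans hν')
    rw [hK n]
    calc c₀ * Δ * E = ∫ _ in I, (c₀ * E) := hstep1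
      _ ≤ _ := hstep2
      _ ≤ _ := hstep3
  -- positivity of K
  constructor
  · -- part (i)
    intro lmax hlmax Δ hΔ hΔ' n
    obtain ⟨hl1, hl2⟩ := hlmax
    haveI : Nonempty (Set.Icc (-lmax) lmax) :=
      (Set.nonempty_Icc.2 (by linarith)).to_subtype
    have hKpos : 0 < K n :=
      lt_of_lt_of_le (by positivity) (key n 0 Δ lmax hΔ (by simp [abs_of_nonneg, hl1.le]) (by linarith))
    rw [ge_iff_le, ← Real.le_log_iff_exp_le hKpos]
    have hlog : ∀ l₀ : ℝ, |l₀| ≤ lmax →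
        Real.log (c₀ * Δ) + ((∑ t ∈ Finset.Icc 1 n, Real.log (1 + l₀ * x t))
          - n * Δ / (1 - lmax - Δ)) ≤ Real.log (K n) := by
      intro l₀ hl₀
      have h := key n l₀ Δ lmax hΔ hl₀ (by linarith)
      have := Real.log_le_log (by positivity) h
      rwa [Real.log_mul (by positivity) (Real.exp_ne_zero _), Real.log_exp] at this
    rw [Real.log_div one_ne_zero (by positivity)]
    simp only [Real.log_one, zero_sub]
    rcases Nat.eq_zero_or_pos n with hn | hn
    · subst hn
      have h0 := hlog 0 (by simp [abs_of_nonneg, hl1.le])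
      simp only [Nat.cast_zero, zero_mul, zero_div] at h0 ⊢
      rw [show Finset.Icc 1 0 = (∅ : Finset ℕ) from Finset.Icc_eq_empty (by norm_num)] at h0
      simp only [Finset.sum_empty] at h0
      linarith [h0]
    · have hn' : (0:ℝ) < n := Nat.cast_pos.2 hn
      rw [sub_sub, sub_le_iff_le_add]
      rw [mul_comm ((n:ℝ)) _, ← le_div_iff₀ hn']
      refine ciSup_le fun l => ?_
      have hl₀ : |(l : ℝ)| ≤ lmax := abs_le.2 ⟨l.2.1, l.2.2⟩
      have h := hlog l hl₀
      rw [one_div, inv_mul_eq_div]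
      gcongr
      linarith
  · -- part (ii)
    intro n hn
    have hn' : (0:ℝ) < n := by positivity
    have hn4 : (4:ℝ) ≤ n := by exact_mod_cast hn
    set μ : ℝ := (1 / (n:ℝ)) * ∑ t ∈ Finset.Icc 1 n, x t with hμ
    have hμabs : |μ| ≤ 1 := by
      rw [hμ, abs_mul, abs_of_nonneg (by positivity : (0:ℝ) ≤ 1 / (n:ℝ))]
      have h1 : |∑ t ∈ Finset.Icc 1 n, x t| ≤ ∑ t ∈ Finset.Icc 1 n, (1:ℝ) := by
        refine (Finset.abs_sum_le_sum_abs _ _).trans (Finset.sum_le_sum fun t _ => ?_)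
        exact abs_le.2 ⟨(hx t).1, (hx t).2⟩
      rw [Finset.sum_const, Nat.card_Icc, Nat.add_sub_cancel, nsmul_eq_mul, mul_one] at h1
      calc 1 / (n:ℝ) * |∑ t ∈ Finset.Icc 1 n, x t| ≤ 1 / (n:ℝ) * n := by
            exact mul_le_mul_of_nonneg_left h1 (by positivity)
        _ = 1 := by field_simp
    have hsum : (∑ t ∈ Finset.Icc 1 n, x t) = n * μ := by
      rw [hμ]; field_simp
    -- lower bound on the log-sum at l₀ = μ/4
    have hlogsum : (n:ℝ) * μ^2 / 8 ≤ ∑ t ∈ Finset.Icc 1 n, Real.log (1 + (μ/4) * x t) := by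
      have h1 : ∀ t ∈ Finset.Icc 1 n,
          (μ/4) * x t - 2 * ((μ/4) * x t)^2 ≤ Real.log (1 + (μ/4) * x t) := by
        intro t _
        refine log_ge_aux _ ?_
        have := abs_le.1 hμabs
        obtain ⟨h3, h4⟩ := hx t
        nlinarith
      have h2 := Finset.sum_le_sum h1
      have h3 : ∑ t ∈ Finset.Icc 1 n, ((μ/4) * x t - 2 * ((μ/4) * x t)^2)
          ≥ (n:ℝ) * μ^2 / 8 := by
        have h4 : ∀ t ∈ Finset.Icc 1 n, 2 * ((μ/4) * x t)^2 ≤ μ^2 / 8 := by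
          intro t _
          obtain ⟨h5, h6⟩ := hx t
          nlinarith [mul_nonneg (sq_nonneg μ)
            (mul_nonneg (by linarith : (0:ℝ) ≤ 1 - x t) (by linarith : (0:ℝ) ≤ 1 + x t))]
        have h5 := Finset.sum_le_sum h4
        rw [Finset.sum_sub_distrib, ← Finset.mul_sum, hsum]
        rw [Finset.sum_const, Nat.card_Icc, Nat.add_sub_cancel, nsmul_eq_mul] at h5
        nlinarith [h5]
      linarith
    have hninv : 1/(n:ℝ) ≤ 1/4 := by
      rw [div_le_div_iff₀ hn' (by norm_num)]; linarith
    have hkey := key n (μ/4) (1/(n:ℝ)) (1/4) (by positivity)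
      (by have := abs_le.1 hμabs; rw [abs_le]; constructor <;> linarith)
      (by linarith)
    have hKpos : 0 < K n := lt_of_lt_of_le (by positivity) hkey
    rw [ge_iff_le, ← Real.le_log_iff_exp_le hKpos]
    have hlogK : Real.log (c₀ * (1/(n:ℝ)))
        + ((∑ t ∈ Finset.Icc 1 n, Real.log (1 + (μ/4) * x t))
          - n * (1/(n:ℝ)) / (1 - 1/4 - 1/(n:ℝ))) ≤ Real.log (K n) := by
      have := Real.log_le_log (by positivity) hkey
      rwa [Real.log_mul (by positivity) (Real.exp_ne_zero _), Real.log_exp] at this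
    have hq : (n:ℝ) * (1/(n:ℝ)) / (1 - 1/4 - 1/(n:ℝ)) ≤ 2 := by
      rw [mul_one_div, div_self hn'.ne']
      rw [div_le_iff₀ (by linarith : (0:ℝ) < 1 - 1/4 - 1/(n:ℝ))]
      linarith
    have hlogeq : Real.log (c₀ * (1/(n:ℝ))) = - Real.log ((n:ℝ) / c₀) := by
      rw [mul_one_div, Real.log_div hc₀.ne' hn'.ne', Real.log_div hn'.ne' hc₀.ne']
      ring
    rw [hlogeq] at hlogK
    have : ((n:ℝ)/8) * μ^2 = (n:ℝ) * μ^2 / 8 := by ring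
    rw [this]
    linarith
end

section
/- Let c₀ > 0 and let ν be a probability density on [-1,1] with ν(λ) ≥ c₀ for all λ. Let x₁, x₂, … be any (deterministic) sequence in [-1,1], let S_t = Σ_{i=1}^{t} x_i, let K_t = ∫_{-1}^{1} ∏_{i=1}^{t} (1 + λ x_i) ν(λ) dλ, and for α ∈ (0,1) let τ = inf{ t ≥ 1 : K_t ≥ 1/α }. If liminf_{t→∞} |S_t / t| > 0, then liminf_{t→∞} (1/t) log K_t > 0, and consequently τ < ∞. -/
set_option maxHeartbeats 1000000


open MeasureTheory Finset Filter

lemma exp_le_one_add_aux (l y : ℝ) (hl : |l| ≤ 1/2) (hy : |y| ≤ 1) :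
    Real.exp (l * y - 2 * l ^ 2) ≤ 1 + l * y := by
  have hu : |l * y| ≤ 1/2 := by
    rw [abs_mul]
    calc |l| * |y| ≤ (1/2) * 1 := by
          exact mul_le_mul hl hy (abs_nonneg _) (by norm_num)
      _ = 1/2 := by ring
  obtain ⟨hu2, hu1⟩ := abs_le.mp hu
  have hy2 : y ^ 2 ≤ 1 := by nlinarith [abs_le.mp hy]
  have hsq : (l * y) ^ 2 ≤ l ^ 2 := by
    calc (l * y) ^ 2 = l ^ 2 * y ^ 2 := by ring
      _ ≤ l ^ 2 * 1 := mul_le_mul_of_nonneg_left hy2 (sq_nonneg l)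
      _ = l ^ 2 := mul_one _
  set v := l * y - 2 * l ^ 2 with hv
  have h1 : 1 - v ≤ Real.exp (-v) := by linarith [Real.add_one_le_exp (-v)]
  have hvpos : (0:ℝ) < 1 - v := by nlinarith [sq_nonneg l]
  have hE : Real.exp v * Real.exp (-v) = 1 := by rw [← Real.exp_add]; simp
  have h2 : Real.exp v * (1 - v) ≤ 1 := by
    nlinarith [Real.exp_pos v, Real.exp_pos (-v)]
  have h3 : (1:ℝ) ≤ (1 + l * y) * (1 - v) := by nlinarith [sq_nonneg l]
  nlinarith [Real.exp_pos v]

lemma prod_ge_exp_aux (x : ℕ → ℝ) (hx : ∀ t, x t ∈ Set.Icc (-1:ℝ) 1)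
    (l : ℝ) (hl : |l| ≤ 1/2) (t : ℕ) :
    Real.exp (l * (∑ i ∈ Finset.Icc 1 t, x i) - 2 * l ^ 2 * t) ≤
      ∏ i ∈ Finset.Icc 1 t, (1 + l * x i) := by
  have hcard : (Finset.Icc 1 t).card = t := by simp
  have hsum : l * (∑ i ∈ Finset.Icc 1 t, x i) - 2 * l ^ 2 * t
      = ∑ i ∈ Finset.Icc 1 t, (l * x i - 2 * l ^ 2) := by
    rw [Finset.sum_sub_distrib, Finset.mul_sum, Finset.sum_const, hcard]
    push_cast
    ring
  rw [hsum, Real.exp_sum]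
  refine Finset.prod_le_prod (fun i _ => (Real.exp_pos _).le) (fun i _ => ?_)
  exact exp_le_one_add_aux l (x i) hl (abs_le.mpr ⟨(hx i).1, (hx i).2⟩)

/-- a deterministic statement.  If the running averages of the
payoffs are asymptotically bounded away from zero in absolute value, then the
mixture-method wealth grows at a positive exponential rate, and in particular
the sequential test stops in finite time (the wealth eventually exceeds `1/α`). -/
theorem stmt_4
    (c₀ : ℝ) (hc₀ : 0 < c₀)
    (ν : ℝ → ℝ) (hν_lb : ∀ l ∈ Set.Icc (-1 : ℝ) 1, c₀ ≤ ν l)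
    (hν_prob : ∫ l in Set.Icc (-1 : ℝ) 1, ν l = 1)
    (x : ℕ → ℝ) (hx : ∀ t, x t ∈ Set.Icc (-1 : ℝ) 1)
    (S : ℕ → ℝ) (hS : ∀ t, S t = ∑ i ∈ Finset.Icc 1 t, x i)
    (K : ℕ → ℝ)
    (hK : ∀ t, K t =
      ∫ l in Set.Icc (-1 : ℝ) 1, (∏ i ∈ Finset.Icc 1 t, (1 + l * x i)) * ν l)
    (α : ℝ) (hα : α ∈ Set.Ioo (0 : ℝ) 1)
    (hliminf : 0 < Filter.liminf (fun t : ℕ => |S t / (t : ℝ)|) Filter.atTop) :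
    0 < Filter.liminf (fun t : ℕ => (1 / (t : ℝ)) * Real.log (K t)) Filter.atTop ∧
    ∃ t : ℕ, 1 ≤ t ∧ K t ≥ 1 / α := by
  have hx1 : ∀ i, |x i| ≤ 1 := fun i => abs_le.mpr ⟨(hx i).1, (hx i).2⟩
  set ε := Filter.liminf (fun t : ℕ => |S t / (t : ℝ)|) Filter.atTop with hεdef
  have hε : 0 < ε := hliminf
  set δ := min (ε / 16) (1/2 : ℝ) with hδdef
  have hδpos : 0 < δ := lt_min (by linarith) (by norm_num)
  have hδhalf : δ ≤ 1/2 := min_le_right _ _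
  have hδε : δ ≤ ε / 16 := min_le_left _ _
  set c := δ * ε / 8 with hcdef
  have hcpos : 0 < c := by positivity
  -- eventual lower bound on |S t / t|
  have hbelow : Filter.IsBoundedUnder (· ≥ ·) Filter.atTop
      (fun t : ℕ => |S t / (t : ℝ)|) :=
    Filter.isBoundedUnder_of ⟨0, fun t => abs_nonneg _⟩
  have hev : ∀ᶠ t : ℕ in Filter.atTop, ε / 2 < |S t / (t : ℝ)| :=
    Filter.eventually_lt_of_lt_liminf (by linarith) hbelow
  -- integrability of ν
  have hν_int : IntegrableOn ν (Set.Icc (-1:ℝ) 1) := by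
    by_contra h
    rw [MeasureTheory.integral_undef h] at hν_prob
    norm_num at hν_prob
  -- pointwise facts on the products
  have hP_nonneg : ∀ t : ℕ, ∀ l ∈ Set.Icc (-1:ℝ) 1,
      0 ≤ ∏ i ∈ Finset.Icc 1 t, (1 + l * x i) := by
    intro t l hl
    refine Finset.prod_nonneg fun i _ => ?_
    have h : |l * x i| ≤ 1 := by
      rw [abs_mul]
      calc |l| * |x i| ≤ 1 * 1 := by
            exact mul_le_mul (abs_le.mpr ⟨hl.1, hl.2⟩) (hx1 i) (abs_nonneg _) zero_le_one
        _ = 1 := by ring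
    linarith [(abs_le.mp h).1]
  have hP_le : ∀ t : ℕ, ∀ l ∈ Set.Icc (-1:ℝ) 1,
      (∏ i ∈ Finset.Icc 1 t, (1 + l * x i)) ≤ 2 ^ t := by
    intro t l hl
    calc (∏ i ∈ Finset.Icc 1 t, (1 + l * x i)) ≤ ∏ i ∈ Finset.Icc 1 t, (2:ℝ) := by
          refine Finset.prod_le_prod (fun i _ => ?_) (fun i _ => ?_)
          · have h : |l * x i| ≤ 1 := by
              rw [abs_mul]
              calc |l| * |x i| ≤ 1 * 1 := by
                    exact mul_le_mul (abs_le.mpr ⟨hl.1, hl.2⟩) (hx1 i) (abs_nonneg _)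
                      zero_le_one
                _ = 1 := by ring
            linarith [(abs_le.mp h).1]
          · have h : |l * x i| ≤ 1 := by
              rw [abs_mul]
              calc |l| * |x i| ≤ 1 * 1 := by
                    exact mul_le_mul (abs_le.mpr ⟨hl.1, hl.2⟩) (hx1 i) (abs_nonneg _)
                      zero_le_one
                _ = 1 := by ring
            linarith [(abs_le.mp h).2]
      _ = 2 ^ t := by
          rw [Finset.prod_const]
          simp
  have hP_cont : ∀ t : ℕ, Continuous (fun l : ℝ => ∏ i ∈ Finset.Icc 1 t, (1 + l * x i)) := by
    intro t
    exact continuous_finset_prod _ fun i _ => by continuity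
  have hPν_int : ∀ t : ℕ, IntegrableOn
      (fun l => (∏ i ∈ Finset.Icc 1 t, (1 + l * x i)) * ν l) (Set.Icc (-1:ℝ) 1) := by
    intro t
    refine Integrable.mono' ((hν_int.abs).const_mul (2 ^ t))
      (((hP_cont t).aestronglyMeasurable).mul hν_int.1) ?_
    refine (MeasureTheory.ae_restrict_iff' measurableSet_Icc).mpr
      (Filter.Eventually.of_forall fun l hl => ?_)
    rw [norm_mul, Real.norm_eq_abs, Real.norm_eq_abs, abs_of_nonneg (hP_nonneg t l hl)]
    exact mul_le_mul_of_nonneg_right (hP_le t l hl) (abs_nonneg _)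
  -- upper bound on K
  have hKub : ∀ t : ℕ, K t ≤ 2 ^ t := by
    intro t
    rw [hK t]
    calc (∫ l in Set.Icc (-1:ℝ) 1, (∏ i ∈ Finset.Icc 1 t, (1 + l * x i)) * ν l)
        ≤ ∫ l in Set.Icc (-1:ℝ) 1, (2:ℝ) ^ t * ν l := by
          refine MeasureTheory.setIntegral_mono_on (hPν_int t) (hν_int.const_mul _)
            measurableSet_Icc fun l hl => ?_
          refine mul_le_mul_of_nonneg_right (hP_le t l hl) ?_
          linarith [hν_lb l hl]
      _ = 2 ^ t := by
          rw [MeasureTheory.integral_const_mul, hν_prob, mul_one]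
  -- key lower bound
  have key : ∀ᶠ t : ℕ in Filter.atTop, c₀ * (δ/2) * Real.exp (c * t) ≤ K t := by
    filter_upwards [hev, Filter.eventually_ge_atTop 1] with t htε ht1
    have htpos : (0:ℝ) < t := by exact_mod_cast ht1
    have hSt : ε/2 * t ≤ |S t| := by
      rw [abs_div, abs_of_pos htpos] at htε
      exact le_of_lt ((lt_div_iff₀ htpos).mp htε)
    obtain ⟨a, b, hab, hsub, hlen, hprop⟩ :
        ∃ a b : ℝ, a ≤ b ∧ Set.Icc a b ⊆ Set.Icc (-1:ℝ) 1 ∧ b - a = δ/2 ∧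
          ∀ l ∈ Set.Icc a b, |l| ≤ δ ∧ δ/2 * |S t| ≤ l * S t := by
      rcases le_or_gt 0 (S t) with hs | hs
      · refine ⟨δ/2, δ, by linarith, ?_, by ring, ?_⟩
        · intro l hl
          exact ⟨by linarith [hl.1], by linarith [hl.2, hδhalf]⟩
        · intro l hl
          refine ⟨abs_le.mpr ⟨by linarith [hl.1], hl.2⟩, ?_⟩
          rw [abs_of_nonneg hs]
          exact mul_le_mul_of_nonneg_right hl.1 hs
      · refine ⟨-δ, -δ/2, by linarith, ?_, by ring, ?_⟩
        · intro l hl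
          exact ⟨by linarith [hl.1, hδhalf], by linarith [hl.2, hδhalf]⟩
        · intro l hl
          refine ⟨abs_le.mpr ⟨hl.1, by linarith [hl.2]⟩, ?_⟩
          rw [abs_of_neg hs]
          nlinarith [mul_nonneg (by linarith [hl.2] : (0:ℝ) ≤ -(l + δ/2))
            (by linarith : (0:ℝ) ≤ -(S t))]
    have hmeasIcc : (volume (Set.Icc a b)).toReal = δ/2 := by
      rw [Real.volume_Icc, ENNReal.toReal_ofReal (by linarith)]
      exact hlen
    have hexp_le : ∀ l ∈ Set.Icc a b,
        Real.exp (c * t) * c₀ ≤ (∏ i ∈ Finset.Icc 1 t, (1 + l * x i)) * ν l := by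
      intro l hl
      obtain ⟨hlδ, hlS⟩ := hprop l hl
      have hl12 : |l| ≤ 1/2 := le_trans hlδ hδhalf
      have h1 := prod_ge_exp_aux x hx l hl12 t
      rw [← hS t] at h1
      have hl2 : l ^ 2 ≤ δ ^ 2 := by nlinarith [sq_abs l, abs_nonneg l]
      have he1 : δ/2 * (ε/2 * t) ≤ δ/2 * |S t| :=
        mul_le_mul_of_nonneg_left hSt (by positivity)
      have h2δ : 2 * δ ^ 2 ≤ δ * ε / 8 := by
        nlinarith [mul_le_mul_of_nonneg_left hδε (by positivity : (0:ℝ) ≤ 2 * δ)]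
      have he2 : 2 * l ^ 2 * t ≤ δ * ε / 8 * t := by
        have ha1 := mul_le_mul_of_nonneg_right hl2 htpos.le
        have ha2 := mul_le_mul_of_nonneg_right h2δ htpos.le
        nlinarith
      have hexp : c * t ≤ l * S t - 2 * l ^ 2 * t := by
        have : c * t = δ * ε / 8 * t := by rw [hcdef]
        nlinarith
      have h2 : Real.exp (c * t) ≤ ∏ i ∈ Finset.Icc 1 t, (1 + l * x i) :=
        le_trans (Real.exp_le_exp.mpr hexp) h1
      exact mul_le_mul h2 (hν_lb l (hsub hl)) hc₀.le (hP_nonneg t l (hsub hl))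
    have step1 : Real.exp (c * t) * c₀ * (δ/2)
        ≤ ∫ l in Set.Icc a b, (∏ i ∈ Finset.Icc 1 t, (1 + l * x i)) * ν l := by
      have h := MeasureTheory.setIntegral_ge_of_const_le measurableSet_Icc
        (measure_Icc_lt_top).ne hexp_le ((hPν_int t).mono_set hsub)
      rw [measureReal_def, hmeasIcc, smul_eq_mul] at h
      linarith
    have step2 : (∫ l in Set.Icc a b, (∏ i ∈ Finset.Icc 1 t, (1 + l * x i)) * ν l)
        ≤ ∫ l in Set.Icc (-1:ℝ) 1, (∏ i ∈ Finset.Icc 1 t, (1 + l * x i)) * ν l := by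
      refine MeasureTheory.setIntegral_mono_set (hPν_int t) ?_ (HasSubset.Subset.eventuallyLE hsub)
      refine (MeasureTheory.ae_restrict_iff' measurableSet_Icc).mpr
        (Filter.Eventually.of_forall fun l hl => ?_)
      exact mul_nonneg (hP_nonneg t l hl) (le_trans hc₀.le (hν_lb l hl))
    rw [hK t]
    calc c₀ * (δ/2) * Real.exp (c * t) = Real.exp (c * t) * c₀ * (δ/2) := by ring
      _ ≤ _ := le_trans step1 step2
  have hA : (0:ℝ) < c₀ * (δ/2) := by positivity
  -- eventual lower bound on the log-growth
  have hlog_ev : ∀ᶠ t : ℕ in Filter.atTop, c/2 ≤ (1/(t:ℝ)) * Real.log (K t) := by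
    have htend : Filter.Tendsto (fun t : ℕ => Real.log (c₀ * (δ/2)) / t)
        Filter.atTop (nhds 0) := tendsto_const_div_atTop_nhds_zero_nat _
    filter_upwards [key, Filter.eventually_ge_atTop 1,
      htend.eventually (eventually_ge_nhds (by linarith : -(c/2) < (0:ℝ)))] with t hKt ht1 hlg
    have htpos : (0:ℝ) < t := by exact_mod_cast ht1
    have hlog : Real.log (c₀ * (δ/2)) + c * t ≤ Real.log (K t) := by
      have h := Real.log_le_log (by positivity) hKt
      rwa [Real.log_mul (ne_of_gt hA) (Real.exp_ne_zero _), Real.log_exp] at h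
    have h1 : (1/(t:ℝ)) * (Real.log (c₀ * (δ/2)) + c * t) ≤ (1/(t:ℝ)) * Real.log (K t) :=
      mul_le_mul_of_nonneg_left hlog (by positivity)
    have h2 : (1/(t:ℝ)) * (Real.log (c₀ * (δ/2)) + c * t)
        = Real.log (c₀ * (δ/2)) / t + c := by
      field_simp
    linarith
  -- upper bound for coboundedness
  have hub : ∀ᶠ t : ℕ in Filter.atTop, (1/(t:ℝ)) * Real.log (K t) ≤ Real.log 2 := by
    filter_upwards [key, Filter.eventually_ge_atTop 1] with t hKt ht1
    have htpos : (0:ℝ) < t := by exact_mod_cast ht1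
    have hlog : Real.log (K t) ≤ t * Real.log 2 := by
      have h := Real.log_le_log (lt_of_lt_of_le (by positivity) hKt) (hKub t)
      rwa [Real.log_pow] at h
    calc (1/(t:ℝ)) * Real.log (K t) ≤ (1/(t:ℝ)) * (t * Real.log 2) :=
          mul_le_mul_of_nonneg_left hlog (by positivity)
      _ = Real.log 2 := by field_simp
  constructor
  · refine lt_of_lt_of_le (by linarith : (0:ℝ) < c/2)
      (Filter.le_liminf_of_le ?_ hlog_ev)
    exact Filter.isCoboundedUnder_ge_of_eventually_le _ hub
  · have h2 : Filter.Tendsto (fun t : ℕ => c₀ * (δ/2) * Real.exp (c * t))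
        Filter.atTop Filter.atTop := by
      refine Filter.Tendsto.const_mul_atTop hA ?_
      exact Real.tendsto_exp_atTop.comp
        (Filter.Tendsto.const_mul_atTop hcpos tendsto_natCast_atTop_atTop)
    obtain ⟨t, ⟨⟨hge, hKt⟩, ht1⟩⟩ :=
      (((h2.eventually_ge_atTop (1/α)).and key).and (Filter.eventually_ge_atTop 1)).exists
    exact ⟨t, ht1, le_trans hge hKt⟩
end

section
/- Let P be a probability measure on ℝ that is absolutely continuous with respect to Lebesgue measure (e.g. the uniform distribution on [0,1]) and let Q be any probability measure on ℝ. Then sup_{ε>0} inf{ KL(P', Q) : P' a probability measure on ℝ with d_KS(P', P) ≤ ε } = KL(P, Q), where d_KS is the Kolmogorov–Smirnov distance and KL the Kullback–Leibler divergence. -/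
open MeasureTheory
open scoped ENNReal

/-- The Kullback–Leibler divergence `KL(μ, ν) = ∫ log(dμ/dν) dμ` when `μ ≪ ν`
(and the log-likelihood ratio is integrable), and `+∞` otherwise. -/
noncomputable def klDiv {𝒳 : Type*} [MeasurableSpace 𝒳] (μ ν : Measure 𝒳) : ℝ≥0∞ :=
  open Classical in
  if μ ≪ ν ∧ Integrable (llr μ ν) μ then ENNReal.ofReal (∫ x, llr μ ν x ∂μ) else ⊤

/-- The Kolmogorov–Smirnov distance between two measures on `ℝ`, i.e. the sup
distance between their cdfs. -/
noncomputable def dKS (μ ν : Measure ℝ) : ℝ :=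
  ⨆ x : ℝ, |(μ (Set.Iic x)).toReal - (ν (Set.Iic x)).toReal|


open Real Filter

section aux
variable {α : Type*} {mα : MeasurableSpace α} {μ ν : Measure α}

lemma my_gibbs [IsProbabilityMeasure μ] [IsProbabilityMeasure ν] (h : μ ≪ ν)
    (hi : Integrable (llr μ ν) μ) : 0 ≤ ∫ x, llr μ ν x ∂μ := by
  have h1 : (fun x ↦ exp (-llr μ ν x)) =ᵐ[μ] fun x ↦ (ν.rnDeriv μ x).toReal :=
    exp_neg_llr h
  have hint : Integrable (fun x ↦ (ν.rnDeriv μ x).toReal) μ :=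
    Measure.integrable_toReal_rnDeriv
  have hint' : Integrable (fun x ↦ exp (-llr μ ν x)) μ := hint.congr h1.symm
  have h2 : ∫ x, exp (-llr μ ν x) ∂μ ≤ 1 := by
    rw [integral_congr_ae h1]
    have := Measure.setIntegral_toReal_rnDeriv_le (μ := ν) (ν := μ) (s := Set.univ)
      (measure_ne_top ν _)
    simp only [setIntegral_univ] at this
    exact this.trans (by simp)
  have h3 : ∀ x, 1 - exp (-llr μ ν x) ≤ llr μ ν x := by
    intro x
    have := Real.add_one_le_exp (-llr μ ν x)
    linarith
  have h4 : ∫ x, (1 - exp (-llr μ ν x)) ∂μ ≤ ∫ x, llr μ ν x ∂μ :=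
    integral_mono ((integrable_const 1).sub hint') hi h3
  have h5 : ∫ x, (1 - exp (-llr μ ν x)) ∂μ = 1 - ∫ x, exp (-llr μ ν x) ∂μ := by
    rw [integral_sub (integrable_const 1) hint']
    simp
  linarith

lemma my_dv [IsProbabilityMeasure μ] [IsProbabilityMeasure ν] {g : α → ℝ}
    (hg : Measurable g) {B : ℝ} (hB : ∀ x, |g x| ≤ B) :
    ENNReal.ofReal (∫ x, g x ∂μ - Real.log (∫ x, Real.exp (g x) ∂ν)) ≤ klDiv μ ν := by
  by_cases hc : μ ≪ ν ∧ Integrable (llr μ ν) μ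
  swap
  · rw [klDiv, if_neg hc]; exact le_top
  rw [klDiv, if_pos hc]
  refine ENNReal.ofReal_le_ofReal ?_
  have hgμ : Integrable g μ :=
    (integrable_const B).mono' hg.aestronglyMeasurable (Filter.Eventually.of_forall hB)
  have hgν : Integrable (fun x ↦ exp (g x)) ν := by
    refine (integrable_const (exp B)).mono' (hg.exp).aestronglyMeasurable ?_
    refine Filter.Eventually.of_forall fun x ↦ ?_
    rw [Real.norm_eq_abs, abs_of_pos (exp_pos _)]
    exact exp_le_exp.mpr ((abs_le.mp (hB x)).2)
  have : NeZero ν := ⟨IsProbabilityMeasure.ne_zero ν⟩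
  have hprob : IsProbabilityMeasure (ν.tilted g) := isProbabilityMeasure_tilted hgν
  have hac : μ ≪ ν.tilted g := hc.1.trans (absolutelyContinuous_tilted hgν)
  have hint' : Integrable (llr μ (ν.tilted g)) μ :=
    integrable_llr_tilted_right hc.1 hgμ hc.2 hgν
  have hkey : ∫ x, llr μ (ν.tilted g) x ∂μ
      = ∫ x, llr μ ν x ∂μ - ∫ x, g x ∂μ + Real.log (∫ x, exp (g x) ∂ν) :=
    integral_llr_tilted_right hc.1 hgμ hgν hc.2
  have h0 : 0 ≤ ∫ x, llr μ (ν.tilted g) x ∂μ := my_gibbs hac hint'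
  linarith

end aux

section step

noncomputable def stepFun (n : ℕ) (a b c : ℕ → ℝ) : ℝ → ℝ :=
  fun x ↦ ∑ i ∈ Finset.range n, Set.indicator (Set.Ioc (a i) (b i)) (fun _ ↦ c i) x

lemma measurable_stepFun (n : ℕ) (a b c : ℕ → ℝ) : Measurable (stepFun n a b c) := by
  refine Finset.measurable_sum _ fun i _ ↦ ?_
  exact (measurable_const.indicator measurableSet_Ioc)

lemma abs_stepFun_le (n : ℕ) (a b c : ℕ → ℝ) (x : ℝ) :
    |stepFun n a b c x| ≤ ∑ i ∈ Finset.range n, |c i| := by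
  refine (Finset.abs_sum_le_sum_abs _ _).trans ?_
  refine Finset.sum_le_sum fun i _ ↦ ?_
  by_cases h : x ∈ Set.Ioc (a i) (b i) <;> simp [Set.indicator, h, abs_nonneg]

lemma integrable_stepFun (μ : Measure ℝ) [IsFiniteMeasure μ] (n : ℕ) (a b c : ℕ → ℝ) :
    Integrable (stepFun n a b c) μ := by
  refine (integrable_const (∑ i ∈ Finset.range n, |c i|)).mono'
    (measurable_stepFun n a b c).aestronglyMeasurable
    (Filter.Eventually.of_forall fun x ↦ ?_)
  simpa using abs_stepFun_le n a b c x

lemma integral_stepFun (μ : Measure ℝ) [IsFiniteMeasure μ] (n : ℕ) (a b c : ℕ → ℝ)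
    (hab : ∀ i, a i ≤ b i) :
    ∫ x, stepFun n a b c x ∂μ
      = ∑ i ∈ Finset.range n, c i * ((μ (Set.Iic (b i))).toReal - (μ (Set.Iic (a i))).toReal) := by
  rw [show stepFun n a b c = fun x ↦ ∑ i ∈ Finset.range n, Set.indicator (Set.Ioc (a i) (b i)) (fun _ ↦ c i) x from rfl]
  rw [integral_finset_sum]
  swap
  · exact fun i _ ↦ (integrable_const (c i)).indicator measurableSet_Ioc
  refine Finset.sum_congr rfl fun i _ ↦ ?_
  rw [integral_indicator_const _ measurableSet_Ioc]
  have hsplit : μ (Set.Iic (a i)) + μ (Set.Ioc (a i) (b i)) = μ (Set.Iic (b i)) := by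
    rw [← measure_union (by exact Set.Iic_disjoint_Ioc le_rfl) measurableSet_Ioc,
      Set.Iic_union_Ioc_eq_Iic (hab i)]
  have : (μ (Set.Ioc (a i) (b i))).toReal
      = (μ (Set.Iic (b i))).toReal - (μ (Set.Iic (a i))).toReal := by
    rw [← hsplit, ENNReal.toReal_add (measure_ne_top _ _) (measure_ne_top _ _)]
    ring
  rw [measureReal_def, this, smul_eq_mul]
  ring

lemma abs_cdf_sub_le (μ ν : Measure ℝ) [IsProbabilityMeasure μ] [IsProbabilityMeasure ν] (x : ℝ) :
    |(μ (Set.Iic x)).toReal - (ν (Set.Iic x)).toReal| ≤ dKS μ ν := by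
  refine le_ciSup (f := fun x : ℝ ↦ |(μ (Set.Iic x)).toReal - (ν (Set.Iic x)).toReal|) ?_ x
  refine ⟨2, fun r hr ↦ ?_⟩
  obtain ⟨y, rfl⟩ := hr
  have h1 : (μ (Set.Iic y)).toReal ≤ 1 := by
    have := prob_le_one (μ := μ) (s := Set.Iic y)
    simpa using ENNReal.toReal_mono ENNReal.one_ne_top this
  have h2 : (ν (Set.Iic y)).toReal ≤ 1 := by
    have := prob_le_one (μ := ν) (s := Set.Iic y)
    simpa using ENNReal.toReal_mono ENNReal.one_ne_top this
  have h3 : (0:ℝ) ≤ (μ (Set.Iic y)).toReal := ENNReal.toReal_nonneg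
  have h4 : (0:ℝ) ≤ (ν (Set.Iic y)).toReal := ENNReal.toReal_nonneg
  rw [abs_le]; constructor <;> linarith

lemma dKS_self (μ : Measure ℝ) : dKS μ μ = 0 := by
  have : (fun x : ℝ ↦ |(μ (Set.Iic x)).toReal - (μ (Set.Iic x)).toReal|) = fun _ ↦ 0 := by
    funext x; simp
  rw [dKS, this, ciSup_const]

lemma abs_integral_stepFun_sub (μ ν : Measure ℝ) [IsProbabilityMeasure μ] [IsProbabilityMeasure ν]
    (n : ℕ) (a b c : ℕ → ℝ) (hab : ∀ i, a i ≤ b i) :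
    |∫ x, stepFun n a b c x ∂μ - ∫ x, stepFun n a b c x ∂ν|
      ≤ (∑ i ∈ Finset.range n, |c i|) * (2 * dKS μ ν) := by
  rw [integral_stepFun μ n a b c hab, integral_stepFun ν n a b c hab, ← Finset.sum_sub_distrib]
  refine (Finset.abs_sum_le_sum_abs _ _).trans ?_
  rw [Finset.sum_mul]
  refine Finset.sum_le_sum fun i _ ↦ ?_
  have hb := abs_cdf_sub_le μ ν (b i)
  have ha := abs_cdf_sub_le μ ν (a i)
  have : c i * ((μ (Set.Iic (b i))).toReal - (μ (Set.Iic (a i))).toReal)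
      - c i * ((ν (Set.Iic (b i))).toReal - (ν (Set.Iic (a i))).toReal)
      = c i * (((μ (Set.Iic (b i))).toReal - (ν (Set.Iic (b i))).toReal)
        - ((μ (Set.Iic (a i))).toReal - (ν (Set.Iic (a i))).toReal)) := by ring
  rw [this, abs_mul]
  refine mul_le_mul_of_nonneg_left ?_ (abs_nonneg _)
  refine (abs_sub _ _).trans ?_
  linarith

end step

section exists_bdd
variable {α : Type*} {mα : MeasurableSpace α}

lemma integrable_of_bdd {μ : Measure α} [IsFiniteMeasure μ] {f : α → ℝ} {B : ℝ}
    (hf : Measurable f) (h : ∀ x, |f x| ≤ B) : Integrable f μ :=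
  (integrable_const B).mono' hf.aestronglyMeasurable
    (Filter.Eventually.of_forall (by simpa [Real.norm_eq_abs] using h))

lemma clamp_abs_le (L N : ℝ) (hN : 0 ≤ N) : |min (max L (-N)) N| ≤ |L| := by
  rw [abs_le]
  constructor
  · exact le_min ((neg_abs_le L).trans (le_max_left _ _)) (by linarith [abs_nonneg L])
  · refine (min_le_left _ _).trans ?_
    rcases le_total (-N) L with h | h
    · rw [max_eq_left h]; exact le_abs_self L
    · rw [max_eq_right h]; linarith [abs_nonneg L]

lemma clamp_ge (L N : ℝ) (hN : 0 ≤ N) :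
    min (max L 0) N - max (-L) 0 ≤ min (max L (-N)) N := by
  rcases le_total 0 L with h | h
  · rw [max_eq_right (by linarith : -L ≤ 0), max_eq_left h, max_eq_left (by linarith : -N ≤ L)]
    simp
  · rw [max_eq_right h, max_eq_left (by linarith : 0 ≤ -L), min_eq_left hN]
    refine le_min ((le_max_left _ _).trans_eq' (by ring) : _ ≤ max L (-N)) (by linarith)

lemma neg_mul_log_le_one {u : ℝ} (hu : 0 ≤ u) : u * max (-Real.log u) 0 ≤ 1 := by
  rcases le_or_gt u 0 with h | hpos
  · have : u = 0 := le_antisymm h hu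
    simp [this]
  rcases le_total 1 u with h1 | h1
  · rw [max_eq_right (by simpa using Real.log_nonneg h1)]
    simp
  · rw [max_eq_left (by simpa using Real.log_nonpos hu h1)]
    have hlog : -Real.log u = Real.log u⁻¹ := (Real.log_inv u).symm
    rw [hlog]
    have h2 : Real.log u⁻¹ ≤ u⁻¹ - 1 := Real.log_le_sub_one_of_pos (by positivity)
    have h3 : u * Real.log u⁻¹ ≤ u * (u⁻¹ - 1) := by
      exact mul_le_mul_of_nonneg_left h2 hu
    have h4 : u * (u⁻¹ - 1) = 1 - u := by field_simp
    linarith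

lemma log_max_of_pos {u v : ℝ} (hu : 0 < u) (hv : 0 < v) :
    Real.log (max u v) = max (Real.log u) (Real.log v) := by
  rcases le_total u v with h | h
  · rw [max_eq_right h, max_eq_right (Real.log_le_log hu h)]
  · rw [max_eq_left h, max_eq_left (Real.log_le_log hv h)]

lemma exists_bdd_of_not_ac {P Q : Measure α} [IsProbabilityMeasure P] [IsProbabilityMeasure Q]
    (hnac : ¬ P ≪ Q) (M : ℝ) :
    ∃ (g : α → ℝ) (B : ℝ), Measurable g ∧ (∀ x, |g x| ≤ B) ∧
      M < ∫ x, g x ∂P - Real.log (∫ x, Real.exp (g x) ∂Q) := by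
  rw [Measure.AbsolutelyContinuous] at hnac
  push_neg at hnac
  obtain ⟨s, hQs, hPs⟩ := hnac
  set t := toMeasurable Q s with ht_def
  have ht : MeasurableSet t := measurableSet_toMeasurable Q s
  have hQt : Q t = 0 := by rw [ht_def, measure_toMeasurable]; exact hQs
  have hPt : P t ≠ 0 := fun h ↦ hPs (le_antisymm (h ▸ measure_mono (subset_toMeasurable Q s))
    zero_le)
  set p := (P t).toReal with hp_def
  have hp : 0 < p := ENNReal.toReal_pos hPt (measure_ne_top _ _)
  set c := max ((M + 1) / p) 1 with hc_def
  have hc1 : (1:ℝ) ≤ c := le_max_right _ _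
  have hc0 : 0 < c := lt_of_lt_of_le one_pos hc1
  refine ⟨t.indicator (fun _ ↦ c), c, measurable_const.indicator ht, fun x ↦ ?_, ?_⟩
  · by_cases hx : x ∈ t <;> simp [hx, abs_of_pos hc0, hc0.le]
  · have hIP : ∫ x, t.indicator (fun _ ↦ c) x ∂P = p * c := by
      rw [integral_indicator_const _ ht, smul_eq_mul, measureReal_def]
    have hexp : (fun x ↦ Real.exp (t.indicator (fun _ ↦ c) x))
        = fun x ↦ t.indicator (fun _ ↦ Real.exp c - 1) x + 1 := by
      funext x
      by_cases hx : x ∈ t <;> simp [hx]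
    have hIQ : ∫ x, Real.exp (t.indicator (fun _ ↦ c) x) ∂Q = 1 := by
      rw [hexp, integral_add ((integrable_const _).indicator ht) (integrable_const 1),
        integral_indicator_const _ ht]
      simp [hQt, measureReal_def]
    rw [hIP, hIQ, Real.log_one, sub_zero]
    calc M < M + 1 := by linarith
    _ = ((M + 1) / p) * p := by field_simp
    _ ≤ c * p := mul_le_mul_of_nonneg_right (le_max_left _ _) hp.le
    _ = p * c := mul_comm _ _

end exists_bdd

section exists_bdd2
variable {α : Type*} {mα : MeasurableSpace α}

lemma integrable_of_nonneg_of_lintegral_lt {μ : Measure α} {f : α → ℝ}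
    (hm : Measurable f) (h0 : ∀ x, 0 ≤ f x)
    (h : ∫⁻ x, ENNReal.ofReal (f x) ∂μ < ⊤) : Integrable f μ :=
  ⟨hm.aestronglyMeasurable,
    (hasFiniteIntegral_iff_ofReal (Filter.Eventually.of_forall h0)).mpr h⟩

lemma exists_bdd_of_ac {P Q : Measure α} [IsProbabilityMeasure P] [IsProbabilityMeasure Q]
    (hPQ : P ≪ Q) (M : ℝ) (hM : ENNReal.ofReal M < klDiv P Q) :
    ∃ (g : α → ℝ) (B : ℝ), Measurable g ∧ (∀ x, |g x| ≤ B) ∧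
      M < ∫ x, g x ∂P - Real.log (∫ x, Real.exp (g x) ∂Q) := by
  classical
  set t : α → ℝ := fun x ↦ (P.rnDeriv Q x).toReal with ht_def
  have hmt : Measurable t := (Measure.measurable_rnDeriv P Q).ennreal_toReal
  have ht0 : ∀ x, 0 ≤ t x := fun x ↦ ENNReal.toReal_nonneg
  set g : ℕ → α → ℝ := fun n x ↦ min (Real.log (max (t x) (Real.exp (-(n:ℝ))))) (n:ℝ)
    with hg_def
  have hgm : ∀ n, Measurable (g n) :=
    fun n ↦ ((hmt.max measurable_const).log).min measurable_const
  have hgb : ∀ n, ∀ x, |g n x| ≤ (n:ℝ) := by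
    intro n x
    rw [abs_le]
    constructor
    · refine le_min ?_ (by have := Nat.cast_nonneg (α := ℝ) n; linarith)
      calc -(n:ℝ) = Real.log (Real.exp (-(n:ℝ))) := (Real.log_exp _).symm
        _ ≤ _ := Real.log_le_log (Real.exp_pos _) (le_max_right _ _)
    · exact min_le_right _ _
  have hgP : ∀ n, Integrable (g n) P := fun n ↦ integrable_of_bdd (hgm n) (hgb n)
  have hgexp : ∀ n x, Real.exp (g n x)
      = min (max (t x) (Real.exp (-(n:ℝ)))) (Real.exp (n:ℝ)) := by
    intro n x
    rw [hg_def]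
    rw [Real.exp_strictMono.monotone.map_min,
      Real.exp_log (lt_of_lt_of_le (Real.exp_pos _) (le_max_right _ _))]
  have hexpint : ∀ n, Integrable (fun x ↦ Real.exp (g n x)) Q := by
    intro n
    refine integrable_of_bdd ((hgm n).exp) (B := Real.exp (n:ℝ)) fun x ↦ ?_
    rw [abs_of_pos (Real.exp_pos _)]
    exact Real.exp_le_exp.mpr (abs_le.mp (hgb n x)).2
  have hint_t : Integrable t Q := Measure.integrable_toReal_rnDeriv
  have ht_le : ∫ x, t x ∂Q ≤ 1 := by
    have := Measure.setIntegral_toReal_rnDeriv_le (μ := P) (ν := Q) (s := Set.univ)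
      (measure_ne_top P _)
    simp only [setIntegral_univ] at this
    exact this.trans (by simp)
  have hZ_le : ∀ n, ∫ x, Real.exp (g n x) ∂Q ≤ 1 + Real.exp (-(n:ℝ)) := by
    intro n
    calc ∫ x, Real.exp (g n x) ∂Q ≤ ∫ x, (t x + Real.exp (-(n:ℝ))) ∂Q := by
          refine integral_mono (hexpint n) (hint_t.add (integrable_const _)) fun x ↦ ?_
          rw [hgexp n x]
          exact (min_le_left _ _).trans
            (max_le (le_add_of_nonneg_right (Real.exp_pos _).le)
              (le_add_of_nonneg_left (ht0 x)))
      _ = (∫ x, t x ∂Q) + Real.exp (-(n:ℝ)) := by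
          rw [integral_add hint_t (integrable_const _)]
          simp
      _ ≤ 1 + Real.exp (-(n:ℝ)) := by linarith
  have hZ_pos : ∀ n, 0 < ∫ x, Real.exp (g n x) ∂Q := by
    intro n
    have h1 : Real.exp (-(n:ℝ)) = ∫ _ : α, Real.exp (-(n:ℝ)) ∂Q := by simp
    refine lt_of_lt_of_le (Real.exp_pos (-(n:ℝ))) (h1.le.trans ?_)
    refine integral_mono (integrable_const _) (hexpint n) fun x ↦ ?_
    rw [hgexp n x]
    refine le_min (le_max_right _ _) (Real.exp_le_exp.mpr ?_)
    have := Nat.cast_nonneg (α := ℝ) n; linarith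
  have hlogZ : ∀ n, Real.log (∫ x, Real.exp (g n x) ∂Q) ≤ Real.exp (-(n:ℝ)) := by
    intro n
    calc Real.log (∫ x, Real.exp (g n x) ∂Q) ≤ Real.log (1 + Real.exp (-(n:ℝ))) :=
          Real.log_le_log (hZ_pos n) (hZ_le n)
      _ ≤ (1 + Real.exp (-(n:ℝ))) - 1 := Real.log_le_sub_one_of_pos (by positivity)
      _ = Real.exp (-(n:ℝ)) := by ring
  have hae : ∀ᵐ x ∂P, 0 < t x := by
    filter_upwards [Measure.rnDeriv_pos hPQ, hPQ.ae_le (Measure.rnDeriv_lt_top P Q)]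
      with x h1 h2
    exact ENNReal.toReal_pos h1.ne' h2.ne
  have hgeq : ∀ᵐ x ∂P, ∀ n : ℕ, g n x = min (max (llr P Q x) (-(n:ℝ))) (n:ℝ) := by
    filter_upwards [hae] with x hx
    intro n
    rw [hg_def]
    simp only
    rw [log_max_of_pos hx (Real.exp_pos _), Real.log_exp]
    rfl
  by_cases hint : Integrable (llr P Q) P
  · -- integrable case
    have hM' : M < ∫ x, llr P Q x ∂P := by
      by_contra h
      push_neg at h
      rw [klDiv, if_pos ⟨hPQ, hint⟩] at hM
      exact absurd hM (not_lt.mpr (ENNReal.ofReal_le_ofReal h))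
    have hconv : Filter.Tendsto (fun n : ℕ ↦ ∫ x, g n x ∂P) Filter.atTop
        (nhds (∫ x, llr P Q x ∂P)) := by
      refine tendsto_integral_of_dominated_convergence (fun x ↦ |llr P Q x|)
        (fun n ↦ (hgm n).aestronglyMeasurable) hint.abs ?_ ?_
      · intro n
        filter_upwards [hgeq] with x hx
        rw [Real.norm_eq_abs, hx n]
        exact clamp_abs_le _ _ (Nat.cast_nonneg n)
      · filter_upwards [hgeq] with x hx
        refine tendsto_const_nhds.congr' ?_
        filter_upwards [Filter.eventually_ge_atTop ⌈|llr P Q x|⌉₊] with n hn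
        have hn' : |llr P Q x| ≤ (n:ℝ) := (Nat.le_ceil _).trans (Nat.cast_le.mpr hn)
        rw [abs_le] at hn'
        rw [hx n, max_eq_left (by linarith), min_eq_left (by linarith)]
    have h1 : ∀ᶠ n : ℕ in Filter.atTop,
        (M + ∫ x, llr P Q x ∂P) / 2 < ∫ x, g n x ∂P :=
      hconv.eventually_const_lt (by linarith)
    have h2 : Filter.Tendsto (fun n : ℕ ↦ Real.exp (-(n:ℝ))) Filter.atTop (nhds 0) := by
      refine Real.tendsto_exp_atBot.comp ?_
      exact Filter.tendsto_neg_atBot_iff.mpr tendsto_natCast_atTop_atTop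
    have h3 : ∀ᶠ n : ℕ in Filter.atTop,
        Real.exp (-(n:ℝ)) < (∫ x, llr P Q x ∂P - M) / 2 :=
      h2.eventually_lt_const (by linarith)
    obtain ⟨n, hn1, hn3⟩ := (h1.and h3).exists
    exact ⟨g n, n, hgm n, hgb n, by linarith [hlogZ n]⟩
  · -- non-integrable case
    set F : α → ℝ := fun x ↦ max (-llr P Q x) 0 with hF_def
    have hFmeas : Measurable F := (measurable_llr P Q).neg.max measurable_const
    have hF0 : ∀ x, 0 ≤ F x := fun x ↦ le_max_right _ _
    have hFlint : ∫⁻ x, ENNReal.ofReal (F x) ∂P ≤ 1 := by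
      have hPd : P = Q.withDensity (P.rnDeriv Q) :=
        (Measure.withDensity_rnDeriv_eq P Q hPQ).symm
      calc ∫⁻ x, ENNReal.ofReal (F x) ∂P
          = ∫⁻ x, (P.rnDeriv Q x) * ENNReal.ofReal (F x) ∂Q := by
            conv_lhs => rw [hPd]
            rw [lintegral_withDensity_eq_lintegral_mul _ (Measure.measurable_rnDeriv P Q)
              (hFmeas.ennreal_ofReal)]
            rfl
        _ ≤ ∫⁻ _, 1 ∂Q := by
            refine lintegral_mono_ae ?_
            filter_upwards [Measure.rnDeriv_lt_top P Q] with x hx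
            have hre : P.rnDeriv Q x = ENNReal.ofReal (t x) := by
              rw [ht_def, ENNReal.ofReal_toReal hx.ne]
            rw [hre, ← ENNReal.ofReal_mul (ht0 x), ← ENNReal.ofReal_one]
            refine ENNReal.ofReal_le_ofReal ?_
            exact neg_mul_log_le_one (ht0 x)
        _ = 1 := by simp
    have hFint : Integrable F P :=
      integrable_of_nonneg_of_lintegral_lt hFmeas hF0
        (lt_of_le_of_lt hFlint ENNReal.one_lt_top)
    have hpos_not : ¬ Integrable (fun x ↦ max (llr P Q x) 0) P := by
      intro h
      refine hint ?_
      have heq : llr P Q = fun x ↦ max (llr P Q x) 0 - max (-llr P Q x) 0 := by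
        funext x
        rcases le_total 0 (llr P Q x) with h' | h'
        · rw [max_eq_left h', max_eq_right (by linarith)]; ring
        · rw [max_eq_right h', max_eq_left (by linarith)]; ring
      rw [heq]
      exact h.sub hFint
    set φ : ℕ → α → ℝ := fun n x ↦ min (max (llr P Q x) 0) (n:ℝ) with hφ_def
    have hφm : ∀ n, Measurable (φ n) :=
      fun n ↦ ((measurable_llr P Q).max measurable_const).min measurable_const
    have hφ0 : ∀ n x, 0 ≤ φ n x :=
      fun n x ↦ le_min (le_max_right _ _) (Nat.cast_nonneg n)
    have hφb : ∀ n x, φ n x ≤ (n:ℝ) := fun n x ↦ min_le_right _ _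
    have hφint : ∀ n, Integrable (φ n) P := by
      intro n
      refine integrable_of_bdd (hφm n) (B := (n:ℝ)) fun x ↦ ?_
      rw [abs_of_nonneg (hφ0 n x)]
      exact hφb n x
    have hsup : ∀ K : ℝ, ∃ n : ℕ, K ≤ ∫ x, φ n x ∂P := by
      intro K
      rcases le_or_gt K 0 with hK | hK
      · exact ⟨0, hK.trans (integral_nonneg (hφ0 0))⟩
      have hlint : ∫⁻ x, ENNReal.ofReal (max (llr P Q x) 0) ∂P = ⊤ := by
        by_contra h
        exact hpos_not (integrable_of_nonneg_of_lintegral_lt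
          ((measurable_llr P Q).max measurable_const) (fun x ↦ le_max_right _ _)
          (lt_top_iff_ne_top.mpr h))
      have hmono_sup : (⨆ n : ℕ, ∫⁻ x, ENNReal.ofReal (φ n x) ∂P)
          = ∫⁻ x, ENNReal.ofReal (max (llr P Q x) 0) ∂P := by
        rw [← lintegral_iSup (fun n ↦ (hφm n).ennreal_ofReal) ?_]
        · refine lintegral_congr fun x ↦ ?_
          refine le_antisymm (iSup_le fun n ↦ ENNReal.ofReal_le_ofReal (min_le_left _ _)) ?_
          refine le_iSup_of_le ⌈max (llr P Q x) 0⌉₊ (le_of_eq ?_)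
          rw [hφ_def]
          simp only
          rw [min_eq_left (Nat.le_ceil _)]
        · intro n m hnm x
          exact ENNReal.ofReal_le_ofReal (min_le_min le_rfl (Nat.cast_le.mpr hnm))
      have hlt : ENNReal.ofReal K < ⨆ n : ℕ, ∫⁻ x, ENNReal.ofReal (φ n x) ∂P := by
        rw [hmono_sup, hlint]
        exact ENNReal.ofReal_lt_top
      obtain ⟨n, hn⟩ := lt_iSup_iff.mp hlt
      refine ⟨n, ?_⟩
      have hIn_ne : ∫⁻ x, ENNReal.ofReal (φ n x) ∂P ≠ ⊤ := by
        refine ne_of_lt (lt_of_le_of_lt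
          (lintegral_mono fun x ↦ ENNReal.ofReal_le_ofReal (hφb n x)) ?_)
        rw [lintegral_const]
        exact ENNReal.mul_lt_top ENNReal.ofReal_lt_top (measure_lt_top _ _)
      have hInt_eq : ∫ x, φ n x ∂P = (∫⁻ x, ENNReal.ofReal (φ n x) ∂P).toReal :=
        integral_eq_lintegral_of_nonneg_ae (Filter.Eventually.of_forall (hφ0 n))
          (hφm n).aestronglyMeasurable
      rw [hInt_eq]
      calc K = (ENNReal.ofReal K).toReal := (ENNReal.toReal_ofReal hK.le).symm
        _ ≤ _ := ENNReal.toReal_mono hIn_ne hn.le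
    have hge : ∀ n, ∀ᵐ x ∂P, φ n x - F x ≤ g n x := by
      intro n
      filter_upwards [hgeq] with x hx
      rw [hx n]
      exact clamp_ge _ _ (Nat.cast_nonneg n)
    have key : ∀ n, ∫ x, φ n x ∂P - ∫ x, F x ∂P ≤ ∫ x, g n x ∂P := by
      intro n
      rw [← integral_sub (hφint n) hFint]
      exact integral_mono_ae ((hφint n).sub hFint) (hgP n) (hge n)
    obtain ⟨n, hn⟩ := hsup (M + 2 + ∫ x, F x ∂P)
    refine ⟨g n, n, hgm n, hgb n, ?_⟩
    have h1 := key n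
    have h2 := hlogZ n
    have h3 : Real.exp (-(n:ℝ)) ≤ 1 := by
      rw [Real.exp_le_one_iff]
      have := Nat.cast_nonneg (α := ℝ) n; linarith
    linarith

end exists_bdd2

section approx

lemma clamp_dist (u v B : ℝ) (hv : |v| ≤ B) : |max (min u B) (-B) - v| ≤ |u - v| := by
  rw [abs_le] at hv
  have h1 := le_abs_self (u - v)
  have h2 := neg_abs_le (u - v)
  rcases le_total u (-B) with h | h
  · rw [min_eq_left (by linarith), max_eq_right (by linarith)]
    rw [abs_le]; constructor <;> linarith
  rcases le_total B u with h' | h'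
  · rw [min_eq_right h', max_eq_left (by linarith)]
    rw [abs_le]; constructor <;> linarith
  · rw [min_eq_left h', max_eq_left h]

lemma exp_lipschitz {u v C : ℝ} (hu : u ≤ C) (hv : v ≤ C) :
    |Real.exp u - Real.exp v| ≤ Real.exp C * |u - v| := by
  rcases le_total u v with h | h
  · have key : Real.exp v - Real.exp u ≤ Real.exp C * (v - u) := by
      have h1 : Real.exp u = Real.exp v * Real.exp (u - v) := by
        rw [← Real.exp_add]; ring_nf
      have h2 := Real.add_one_le_exp (u - v)
      have h3 : Real.exp v ≤ Real.exp C := Real.exp_le_exp.mpr hv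
      nlinarith [Real.exp_pos v]
    rw [abs_of_nonpos (by nlinarith [Real.exp_le_exp.mpr h] : Real.exp u - Real.exp v ≤ 0),
      abs_of_nonpos (by linarith : u - v ≤ 0)]
    linarith
  · have key : Real.exp u - Real.exp v ≤ Real.exp C * (u - v) := by
      have h1 : Real.exp v = Real.exp u * Real.exp (v - u) := by
        rw [← Real.exp_add]; ring_nf
      have h2 := Real.add_one_le_exp (v - u)
      have h3 : Real.exp u ≤ Real.exp C := Real.exp_le_exp.mpr hu
      nlinarith [Real.exp_pos u]
    rw [abs_of_nonneg (by nlinarith [Real.exp_le_exp.mpr h] : 0 ≤ Real.exp u - Real.exp v),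
      abs_of_nonneg (by linarith : 0 ≤ u - v)]
    linarith

lemma exists_step_unif {f : ℝ → ℝ} (hc : Continuous f) (hsupp : HasCompactSupport f)
    {δ : ℝ} (hδ : 0 < δ) :
    ∃ (n : ℕ) (a b c : ℕ → ℝ), (∀ i, a i ≤ b i) ∧
      ∀ x, |stepFun n a b c x - f x| ≤ δ := by
  -- support radius
  obtain ⟨r, hr⟩ := hsupp.isBounded.subset_closedBall 0
  set R : ℝ := max r 0 + 1 with hR_def
  have hR1 : 1 ≤ R := by
    have := le_max_right r 0; rw [hR_def]; linarith
  have hR0 : 0 < R := by linarith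
  have hfR : ∀ x : ℝ, x ∉ Set.Ioc (-R) R → f x = 0 := by
    intro x hx
    refine image_eq_zero_of_notMem_tsupport fun hmem ↦ hx ?_
    have := hr hmem
    rw [Metric.mem_closedBall, Real.dist_eq, sub_zero] at this
    rw [abs_le] at this
    have hrR : r ≤ R - 1 := by rw [hR_def]; simp [le_max_left]
    constructor <;> [linarith; linarith]
  -- uniform continuity
  have hu : UniformContinuous f := hsupp.uniformContinuous_of_continuous hc
  rw [Metric.uniformContinuous_iff] at hu
  obtain ⟨η, hη, hmod⟩ := hu δ hδ
  -- grid
  set N : ℕ := ⌈2 * R / η⌉₊ + 1 with hN_def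
  have hN0 : 0 < N := Nat.succ_pos _
  set w : ℝ := 2 * R / N with hw_def
  have hw0 : 0 < w := by positivity
  have hwη : w < η := by
    rw [hw_def, div_lt_iff₀ (by positivity)]
    have h1 : (2 * R / η) < (N : ℝ) := by
      rw [hN_def]
      push_cast
      exact lt_of_le_of_lt (Nat.le_ceil _) (by linarith)
    calc 2 * R = (2 * R / η) * η := by field_simp
      _ < (N:ℝ) * η := by exact mul_lt_mul_of_pos_right h1 hη
      _ = η * N := by ring
  set a : ℕ → ℝ := fun i ↦ -R + w * i with ha_def
  set c : ℕ → ℝ := fun i ↦ f (a (i + 1)) with hc_def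
  have hmono : ∀ i j : ℕ, i ≤ j → a i ≤ a j := by
    intro i j hij
    rw [ha_def]
    simp only
    have : (i:ℝ) ≤ j := Nat.cast_le.mpr hij
    nlinarith
  refine ⟨N, a, fun i ↦ a (i + 1), c, fun i ↦ hmono i (i+1) (Nat.le_succ i), fun x ↦ ?_⟩
  have haN : a N = R := by
    rw [ha_def, hw_def]
    field_simp
    ring
  have ha0 : a 0 = -R := by simp [ha_def]
  by_cases hx : x ∈ Set.Ioc (-R) R
  · -- find the interval index
    set s : ℝ := (x + R) / w with hs_def
    have hs0 : 0 < s := by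
      rw [hs_def]
      apply div_pos _ hw0
      linarith [hx.1]
    have hsN : s ≤ N := by
      rw [hs_def, div_le_iff₀ hw0, hw_def]
      have : w * N = 2 * R := by rw [hw_def]; field_simp
      calc x + R ≤ 2 * R := by linarith [hx.2]
        _ = (N:ℝ) * (2 * R / ↑N) := by field_simp
    set i : ℕ := ⌈s⌉₊ - 1 with hi_def
    have hceil1 : 1 ≤ ⌈s⌉₊ := Nat.one_le_ceil_iff.mpr hs0
    have hi1 : i + 1 = ⌈s⌉₊ := by omega
    have hiN : i < N := by
      have : ⌈s⌉₊ ≤ N := by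
        rw [Nat.ceil_le]
        exact hsN
      omega
    have hmem : x ∈ Set.Ioc (a i) (a (i + 1)) := by
      constructor
      · have h1 : (i:ℝ) < s := by
          have h2 : (⌈s⌉₊ : ℝ) < s + 1 := Nat.ceil_lt_add_one hs0.le
          have h3 : (i:ℝ) = (⌈s⌉₊ : ℝ) - 1 := by
            rw [hi_def]
            push_cast [hceil1]
            ring
          linarith
        have h2 : w * (i:ℝ) < x + R := by
          rw [hs_def, lt_div_iff₀ hw0] at h1
          linarith
        rw [ha_def]
        simp only
        linarith
      · have h1 : s ≤ (i:ℝ) + 1 := by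
          rw [show ((i:ℝ) + 1) = (⌈s⌉₊:ℝ) by exact_mod_cast congrArg Nat.cast hi1]
          exact Nat.le_ceil s
        rw [ha_def]
        simp only
        rw [hs_def, div_le_iff₀ hw0] at h1
        push_cast
        nlinarith
    have hsum : stepFun N a (fun i ↦ a (i + 1)) c x = c i := by
      rw [show stepFun N a (fun i ↦ a (i + 1)) c x
        = ∑ j ∈ Finset.range N, Set.indicator (Set.Ioc (a j) (a (j + 1))) (fun _ ↦ c j) x
        from rfl]
      rw [Finset.sum_eq_single i]
      · rw [Set.indicator_of_mem hmem]
      · intro j _ hji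
        rw [Set.indicator_of_notMem]
        intro hmem'
        rcases lt_or_gt_of_ne hji with h | h
        · exact absurd (hmem'.2.trans_lt (lt_of_le_of_lt (hmono (j+1) i h) hmem.1)) (lt_irrefl x)
        · exact absurd (hmem.2.trans_lt (lt_of_le_of_lt (hmono (i+1) j h) hmem'.1)) (lt_irrefl x)
      · intro h
        exact absurd (Finset.mem_range.mpr hiN) h
    rw [hsum, hc_def]
    have hdist : dist (a (i+1)) x < η := by
      rw [Real.dist_eq, abs_of_nonneg (by linarith [hmem.2] : 0 ≤ a (i+1) - x)]
      have : a (i + 1) - a i = w := by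
        rw [ha_def]; push_cast; ring
      linarith [hmem.1]
    have := hmod hdist
    rw [Real.dist_eq] at this
    simpa [abs_sub_comm] using this.le
  · -- outside
    have hstep0 : stepFun N a (fun i ↦ a (i + 1)) c x = 0 := by
      rw [show stepFun N a (fun i ↦ a (i + 1)) c x
        = ∑ j ∈ Finset.range N, Set.indicator (Set.Ioc (a j) (a (j + 1))) (fun _ ↦ c j) x
        from rfl]
      refine Finset.sum_eq_zero fun j hj ↦ ?_
      rw [Finset.mem_range] at hj
      refine Set.indicator_of_notMem (fun hmem ↦ hx ?_) _
      constructor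
      · exact lt_of_le_of_lt (ha0 ▸ hmono 0 j (Nat.zero_le j)) hmem.1
      · exact hmem.2.trans (haN ▸ hmono (j+1) N hj)
    rw [hstep0, hfR x hx]
    simpa using hδ.le

end approx

section glue

lemma integral_abs_le_add (P Q : Measure ℝ) [IsFiniteMeasure P] [IsFiniteMeasure Q]
    {f : ℝ → ℝ} (hf : Integrable f (P + Q)) :
    ∫ x, |f x| ∂P ≤ ∫ x, |f x| ∂(P + Q) := by
  rw [integral_add_measure (hf.abs.mono_measure (Measure.le_add_right le_rfl))
    (hf.abs.mono_measure (Measure.le_add_left le_rfl))]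
  have : 0 ≤ ∫ x, |f x| ∂Q := integral_nonneg fun x ↦ abs_nonneg _
  linarith

lemma integral_abs_le_add' (P Q : Measure ℝ) [IsFiniteMeasure P] [IsFiniteMeasure Q]
    {f : ℝ → ℝ} (hf : Integrable f (P + Q)) :
    ∫ x, |f x| ∂Q ≤ ∫ x, |f x| ∂(P + Q) := by
  rw [integral_add_measure (hf.abs.mono_measure (Measure.le_add_right le_rfl))
    (hf.abs.mono_measure (Measure.le_add_left le_rfl))]
  have : 0 ≤ ∫ x, |f x| ∂P := integral_nonneg fun x ↦ abs_nonneg _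
  linarith

lemma abs_int_le {α : Type*} {mα : MeasurableSpace α} {μ : Measure α} (f : α → ℝ) :
    |∫ x, f x ∂μ| ≤ ∫ x, |f x| ∂μ := by
  simpa [Real.norm_eq_abs] using norm_integral_le_integral_norm (μ := μ) f

lemma exists_step_good (P Q : Measure ℝ) [IsProbabilityMeasure P] [IsProbabilityMeasure Q]
    (M : ℝ) (hM : ENNReal.ofReal M < klDiv P Q) :
    ∃ (n : ℕ) (a b c : ℕ → ℝ), (∀ i, a i ≤ b i) ∧
      M < ∫ x, stepFun n a b c x ∂P
          - Real.log (∫ x, Real.exp (stepFun n a b c x) ∂Q) := by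
  -- Step 1: bounded measurable g
  obtain ⟨g, B, hgm, hgB, hgV⟩ :
      ∃ (g : ℝ → ℝ) (B : ℝ), Measurable g ∧ (∀ x, |g x| ≤ B) ∧
        M < ∫ x, g x ∂P - Real.log (∫ x, Real.exp (g x) ∂Q) := by
    by_cases hac : P ≪ Q
    · exact exists_bdd_of_ac hac M hM
    · exact exists_bdd_of_not_ac hac M
  have hB0 : 0 ≤ B := (abs_nonneg _).trans (hgB 0)
  set V := ∫ x, g x ∂P - Real.log (∫ x, Real.exp (g x) ∂Q) with hV_def
  have hVM : 0 < V - M := by linarith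
  set E := Real.exp (2 * B + 1) with hE_def
  have hE0 : 0 < E := Real.exp_pos _
  set δ : ℝ := min 1 ((V - M) / (4 * (1 + E))) with hδ_def
  have hδ0 : 0 < δ := lt_min one_pos (by positivity)
  have hδ1 : δ ≤ 1 := min_le_left _ _
  have hδ2 : δ ≤ (V - M) / (4 * (1 + E)) := min_le_right _ _
  -- Step 2: continuous compactly supported approximation in L¹(P+Q)
  have hgP : Integrable g P := integrable_of_bdd hgm hgB
  have hgQ : Integrable g Q := integrable_of_bdd hgm hgB
  have hgμ : Integrable g (P + Q) := by
    rw [integrable_add_measure]; exact ⟨hgP, hgQ⟩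
  obtain ⟨f, hfsupp, hfL1, hfcont, hfint⟩ :=
    hgμ.exists_hasCompactSupport_integral_sub_le hδ0
  set f' : ℝ → ℝ := fun x ↦ max (min (f x) B) (-B) with hf'_def
  have hf'cont : Continuous f' := (hfcont.min continuous_const).max continuous_const
  have hf'supp : HasCompactSupport f' := by
    have heq : f' = (fun y ↦ max (min y B) (-B)) ∘ f := rfl
    rw [heq]
    exact hfsupp.comp_left (by rw [min_eq_left hB0, max_eq_left (by linarith)])
  have hf'bd : ∀ x, |f' x| ≤ B := by
    intro x
    rw [abs_le]
    exact ⟨le_max_right _ _, max_le ((min_le_right _ _)) (by linarith)⟩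
  have hf'g : ∀ x, |f' x - g x| ≤ |f x - g x| := fun x ↦ clamp_dist (f x) (g x) B (hgB x)
  have hf'int : Integrable f' (P + Q) := integrable_of_bdd hf'cont.measurable hf'bd
  have hf'L1 : ∫ x, |f' x - g x| ∂(P + Q) ≤ δ := by
    calc ∫ x, |f' x - g x| ∂(P + Q) ≤ ∫ x, |f x - g x| ∂(P + Q) :=
          integral_mono (hf'int.sub hgμ).abs (hfint.sub hgμ).abs hf'g
      _ = ∫ x, ‖g x - f x‖ ∂(P + Q) := by
          refine integral_congr_ae (Filter.Eventually.of_forall fun x ↦ ?_)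
          simp [Real.norm_eq_abs, abs_sub_comm]
      _ ≤ δ := hfL1
  have hf'P : ∫ x, |f' x - g x| ∂P ≤ δ :=
    (integral_abs_le_add P Q (hf'int.sub hgμ)).trans hf'L1
  have hf'Q : ∫ x, |f' x - g x| ∂Q ≤ δ :=
    (integral_abs_le_add' P Q (hf'int.sub hgμ)).trans hf'L1
  -- Step 3: step function approximation in sup norm
  obtain ⟨n, a, b, c, hab, hstep⟩ := exists_step_unif hf'cont hf'supp hδ0
  refine ⟨n, a, b, c, hab, ?_⟩
  set h : ℝ → ℝ := stepFun n a b c with hh_def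
  have hhm : Measurable h := measurable_stepFun n a b c
  have hhbd : ∀ x, |h x| ≤ B + 1 := by
    intro x
    have h1 := hstep x
    have h2 := hf'bd x
    rw [abs_le] at *
    constructor <;> [linarith [h1.1, h2.1]; linarith [h1.2, h2.2]]
  have hhP : Integrable h P := integrable_of_bdd hhm hhbd
  have hf'PInt : Integrable f' P := integrable_of_bdd hf'cont.measurable hf'bd
  have hf'QInt : Integrable f' Q := integrable_of_bdd hf'cont.measurable hf'bd
  -- P-side estimate
  have hPside : |∫ x, h x ∂P - ∫ x, g x ∂P| ≤ 2 * δ := by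
    have e1 : |∫ x, h x ∂P - ∫ x, f' x ∂P| ≤ δ := by
      rw [← integral_sub hhP hf'PInt]
      refine (abs_int_le _).trans ?_
      calc ∫ x, |h x - f' x| ∂P ≤ ∫ _, δ ∂P :=
            integral_mono (hhP.sub hf'PInt).abs (integrable_const δ) hstep
        _ = δ := by simp
    have e2 : |∫ x, f' x ∂P - ∫ x, g x ∂P| ≤ δ := by
      rw [← integral_sub hf'PInt hgP]
      exact (abs_int_le _).trans hf'P
    calc |∫ x, h x ∂P - ∫ x, g x ∂P|
        ≤ |∫ x, h x ∂P - ∫ x, f' x ∂P| + |∫ x, f' x ∂P - ∫ x, g x ∂P| := by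
          have := abs_sub_le (∫ x, h x ∂P) (∫ x, f' x ∂P) (∫ x, g x ∂P)
          linarith
      _ ≤ 2 * δ := by linarith
  -- Q-side estimate
  have hexph : Integrable (fun x ↦ Real.exp (h x)) Q := by
    refine integrable_of_bdd (hhm.exp) (B := Real.exp (B + 1)) fun x ↦ ?_
    rw [abs_of_pos (Real.exp_pos _)]
    exact Real.exp_le_exp.mpr (abs_le.mp (hhbd x)).2
  have hexpf' : Integrable (fun x ↦ Real.exp (f' x)) Q := by
    refine integrable_of_bdd (hf'cont.measurable.exp) (B := Real.exp B) fun x ↦ ?_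
    rw [abs_of_pos (Real.exp_pos _)]
    exact Real.exp_le_exp.mpr (abs_le.mp (hf'bd x)).2
  have hexpg : Integrable (fun x ↦ Real.exp (g x)) Q := by
    refine integrable_of_bdd (hgm.exp) (B := Real.exp B) fun x ↦ ?_
    rw [abs_of_pos (Real.exp_pos _)]
    exact Real.exp_le_exp.mpr (abs_le.mp (hgB x)).2
  set Zh := ∫ x, Real.exp (h x) ∂Q with hZh_def
  set Zg := ∫ x, Real.exp (g x) ∂Q with hZg_def
  have hZg_lb : Real.exp (-B) ≤ Zg := by
    have : Real.exp (-B) = ∫ _ : ℝ, Real.exp (-B) ∂Q := by simp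
    rw [this]
    refine integral_mono (integrable_const _) hexpg fun x ↦ ?_
    exact Real.exp_le_exp.mpr (by linarith [(abs_le.mp (hgB x)).1])
  have hZg_pos : 0 < Zg := lt_of_lt_of_le (Real.exp_pos _) hZg_lb
  have hQside : |Zh - Zg| ≤ 2 * Real.exp (B + 1) * δ := by
    have e1 : |Zh - ∫ x, Real.exp (f' x) ∂Q| ≤ Real.exp (B + 1) * δ := by
      rw [hZh_def, ← integral_sub hexph hexpf']
      refine (abs_int_le _).trans ?_
      calc ∫ x, |Real.exp (h x) - Real.exp (f' x)| ∂Q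
          ≤ ∫ _, Real.exp (B + 1) * δ ∂Q := by
            refine integral_mono (hexph.sub hexpf').abs (integrable_const _) fun x ↦ ?_
            refine (exp_lipschitz (C := B + 1) (abs_le.mp (hhbd x)).2
              (by linarith [(abs_le.mp (hf'bd x)).2])).trans ?_
            exact mul_le_mul_of_nonneg_left (hstep x) (Real.exp_pos _).le
        _ = Real.exp (B + 1) * δ := by simp
    have e2 : |∫ x, Real.exp (f' x) ∂Q - Zg| ≤ Real.exp (B + 1) * δ := by
      rw [hZg_def, ← integral_sub hexpf' hexpg]
      refine (abs_int_le _).trans ?_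
      calc ∫ x, |Real.exp (f' x) - Real.exp (g x)| ∂Q
          ≤ ∫ x, Real.exp (B + 1) * |f' x - g x| ∂Q := by
            refine integral_mono (hexpf'.sub hexpg).abs
              (((hf'int.sub hgμ).mono_measure (Measure.le_add_left le_rfl)).abs.const_mul _)
              fun x ↦ ?_
            exact exp_lipschitz (C := B + 1) (by linarith [(abs_le.mp (hf'bd x)).2])
              (by linarith [(abs_le.mp (hgB x)).2])
        _ = Real.exp (B + 1) * ∫ x, |f' x - g x| ∂Q := by
            rw [integral_const_mul]
        _ ≤ Real.exp (B + 1) * δ := by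
            exact mul_le_mul_of_nonneg_left hf'Q (Real.exp_pos _).le
    have := abs_sub_le Zh (∫ x, Real.exp (f' x) ∂Q) Zg
    linarith
  -- log estimate
  have hZh_pos : 0 < Zh := by
    have h1 : Real.exp (-(B + 1)) = ∫ _ : ℝ, Real.exp (-(B + 1)) ∂Q := by simp
    refine lt_of_lt_of_le (Real.exp_pos (-(B+1))) ?_
    rw [h1, hZh_def]
    refine integral_mono (integrable_const _) hexph fun x ↦ ?_
    exact Real.exp_le_exp.mpr (by linarith [(abs_le.mp (hhbd x)).1])
  set Δ := 2 * Real.exp (B + 1) * δ with hΔ_def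
  have hΔ0 : 0 ≤ Δ := by positivity
  have hlog : Real.log Zh ≤ Real.log Zg + Δ * Real.exp B := by
    have h1 : Real.log Zh ≤ Real.log (Zg + Δ) := by
      refine Real.log_le_log hZh_pos ?_
      have := (abs_le.mp hQside).2
      linarith
    have h2 : Real.log (Zg + Δ) = Real.log Zg + Real.log ((Zg + Δ) / Zg) := by
      rw [← Real.log_mul hZg_pos.ne' (by positivity : ((Zg + Δ) / Zg) ≠ 0)]
      congr 1
      field_simp
    have h3 : Real.log ((Zg + Δ) / Zg) ≤ (Zg + Δ) / Zg - 1 :=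
      Real.log_le_sub_one_of_pos (by positivity)
    have h4 : (Zg + Δ) / Zg - 1 = Δ / Zg := by field_simp; ring
    have h5 : Δ / Zg ≤ Δ * Real.exp B := by
      rw [div_le_iff₀ hZg_pos]
      have h6 : 1 ≤ Real.exp B * Zg := by
        have := mul_le_mul_of_nonneg_left hZg_lb (Real.exp_pos B).le
        rwa [← Real.exp_add, add_neg_cancel, Real.exp_zero] at this
      nlinarith
    linarith
  -- combine
  have hfinal : V - 2 * δ - 2 * E * δ ≤ ∫ x, h x ∂P - Real.log Zh := by
    have h1 := (abs_le.mp hPside).1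
    have h2 : Δ * Real.exp B = 2 * E * δ := by
      have he : Real.exp (2 * B + 1) = Real.exp (B + 1) * Real.exp B := by
        rw [← Real.exp_add]; congr 1; ring
      rw [hΔ_def, hE_def, he]; ring
    rw [hV_def]
    rw [h2] at hlog
    linarith
  have hδ3 : 2 * δ + 2 * E * δ ≤ (V - M) / 2 := by
    have h1 : 2 * δ + 2 * E * δ = 2 * (1 + E) * δ := by ring
    rw [h1]
    calc 2 * (1 + E) * δ ≤ 2 * (1 + E) * ((V - M) / (4 * (1 + E))) := by
          refine mul_le_mul_of_nonneg_left hδ2 (by positivity)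
      _ = (V - M) / 2 := by field_simp; ring
    
  linarith

end glue

/-- for `P` absolutely continuous w.r.t. Lebesgue measure and any
probability measure `Q` on `ℝ`,
`sup_{ε>0} inf { KL(P',Q) : d_KS(P',P) ≤ ε } = KL(P,Q)`. -/
theorem stmt_13
    (P Q : Measure ℝ) [IsProbabilityMeasure P] [IsProbabilityMeasure Q]
    (hP : P ≪ (volume : Measure ℝ)) :
    (⨆ ε : {ε : ℝ // 0 < ε},
      ⨅ P' : {P' : Measure ℝ // IsProbabilityMeasure P' ∧ dKS P' P ≤ (ε : ℝ)},
        klDiv (P' : Measure ℝ) Q) = klDiv P Q := by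
  refine le_antisymm (iSup_le fun ε ↦ ?_) ?_
  · exact iInf_le_of_le ⟨P, inferInstance, by rw [dKS_self]; exact ε.2.le⟩ le_rfl
  · by_contra hlt
    push_neg at hlt
    obtain ⟨M, hM0, hM1, hM2⟩ := (ENNReal.lt_iff_exists_real_btwn).mp hlt
    obtain ⟨n, a, b, c, hab, hV⟩ := exists_step_good P Q M hM2
    set C := ∑ i ∈ Finset.range n, |c i| with hC_def
    have hC0 : 0 ≤ C := Finset.sum_nonneg fun i _ ↦ abs_nonneg _
    set V := ∫ x, stepFun n a b c x ∂P
      - Real.log (∫ x, Real.exp (stepFun n a b c x) ∂Q) with hV_def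
    set ε : ℝ := (V - M) / (2 * C + 1) with hε_def
    have hε0 : 0 < ε := by
      rw [hε_def]
      have : 0 < V - M := by linarith
      positivity
    have hle : ENNReal.ofReal M ≤ ⨆ ε : {ε : ℝ // 0 < ε},
        ⨅ P' : {P' : Measure ℝ // IsProbabilityMeasure P' ∧ dKS P' P ≤ (ε : ℝ)},
          klDiv (P' : Measure ℝ) Q := by
      refine le_iSup_of_le ⟨ε, hε0⟩ (le_iInf fun P' ↦ ?_)
      obtain ⟨P', hP'prob, hP'ks⟩ := P'
      haveI := hP'prob
      have hks0 : 0 ≤ dKS P' P :=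
        le_trans (abs_nonneg _) (abs_cdf_sub_le P' P 0)
      have hbound : |∫ x, stepFun n a b c x ∂P' - ∫ x, stepFun n a b c x ∂P|
          ≤ C * (2 * ε) := by
        refine (abs_integral_stepFun_sub P' P n a b c hab).trans ?_
        refine mul_le_mul_of_nonneg_left (by linarith) hC0
      have h2Cε : C * (2 * ε) < V - M := by
        rw [hε_def]
        have h1 : C * (2 * ((V - M) / (2 * C + 1))) = (2 * C) * (V - M) / (2 * C + 1) := by
          ring
        rw [h1]
        rw [div_lt_iff₀ (by linarith : (0:ℝ) < 2 * C + 1)]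
        nlinarith
      have hval' : M < ∫ x, stepFun n a b c x ∂P'
          - Real.log (∫ x, Real.exp (stepFun n a b c x) ∂Q) := by
        have h3 := (abs_le.mp hbound).1
        have h5 := hV_def
        linarith
      calc ENNReal.ofReal M ≤ ENNReal.ofReal (∫ x, stepFun n a b c x ∂P'
          - Real.log (∫ x, Real.exp (stepFun n a b c x) ∂Q)) :=
            ENNReal.ofReal_le_ofReal hval'.le
        _ ≤ klDiv P' Q := my_dv (measurable_stepFun n a b c) (abs_stepFun_le n a b c)
    exact absurd (lt_of_le_of_lt hle hM1) (lt_irrefl _)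
end

section
/- Let X = {x₁,…,x_m}, let p be a pmf on X with p(x) > 0 for all x, and C_P = 1/min_x p(x) − 1. Let X₁, X₂, … be any sequence of points in X and define q₁ = (1/m,…,1/m) and q_t = Π_{Δ_m}( q_{t-1} + √(m/t) · e_{X_{t-1}}/(C_P p(X_{t-1})) ) for t ≥ 2. Let Q̂_n be the empirical distribution of X₁,…,X_n and let d_χ(Q̂_n, P) = Σ_x (n_x/n)·(n_x/(n p(x)) − 1), where n_x = Σ_{t=1}^n 1{X_t = x}, denote the chi-squared divergence of Q̂_n from P. Then there is a constant C < ∞, depending only on m and C_P, such that for every n, ( (1/n) Σ_{t=1}^n q_t(X_t)/p(X_t) − 1 )² ≥ d_χ(Q̂_n, P)² − C/√n. -/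
open Finset

/-- The probability simplex of pmfs on a finite type `𝒳`. -/
def simplex (𝒳 : Type*) [Fintype 𝒳] : Set (𝒳 → ℝ) :=
  {q | (∀ x, 0 ≤ q x) ∧ ∑ x, q x = 1}

/-- `z` is the Euclidean (ℓ²) projection of `v` onto the probability simplex. -/
def IsSimplexProj {𝒳 : Type*} [Fintype 𝒳] (v z : 𝒳 → ℝ) : Prop :=
  z ∈ simplex 𝒳 ∧ ∀ w ∈ simplex 𝒳, ∑ x, (z x - v x) ^ 2 ≤ ∑ x, (w x - v x) ^ 2

lemma proj_nonexpansive {𝒳 : Type*} [Fintype 𝒳] {v z w : 𝒳 → ℝ}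
    (hz : IsSimplexProj v z) (hw : w ∈ simplex 𝒳) :
    ∑ x, (z x - w x) ^ 2 ≤ ∑ x, (v x - w x) ^ 2 := by
  set c : ℝ := ∑ x, (z x - v x) * (w x - z x) with hc
  have hK : (0:ℝ) ≤ ∑ x, (w x - z x) ^ 2 := by positivity
  have key : ∀ s : ℝ, 0 < s → s ≤ 1 → 0 ≤ 2 * c + s * ∑ x, (w x - z x) ^ 2 := by
    intro s hs hs1
    have hws : (fun x => z x + s * (w x - z x)) ∈ simplex 𝒳 := by
      constructor
      · intro x
        have h1 := hz.1.1 x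
        have h2 := hw.1 x
        show 0 ≤ z x + s * (w x - z x)
        nlinarith
      · have : ∑ x, (z x + s * (w x - z x)) = ∑ x, z x + s * (∑ x, w x - ∑ x, z x) := by
          rw [Finset.sum_add_distrib, ← Finset.sum_sub_distrib, Finset.mul_sum]
        rw [this, hz.1.2, hw.2]; ring
    have h := hz.2 _ hws
    have hexp : ∑ x, ((z x + s * (w x - z x)) - v x) ^ 2
        = ∑ x, (z x - v x) ^ 2 + s * (2 * c) + s ^ 2 * ∑ x, (w x - z x) ^ 2 := by
      rw [hc, Finset.mul_sum, Finset.mul_sum, Finset.mul_sum, ← Finset.sum_add_distrib,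
        ← Finset.sum_add_distrib]
      exact Finset.sum_congr rfl fun x _ => by ring
    rw [hexp] at h
    nlinarith
  have hc0 : 0 ≤ c := by
    by_contra hneg
    push_neg at hneg
    rcases eq_or_lt_of_le hK with hK0 | hKpos
    · have := key 1 one_pos le_rfl
      nlinarith
    · set K := ∑ x, (w x - z x) ^ 2 with hKdef
      have hs' : 0 < min 1 (-c / K) := by
        apply lt_min one_pos
        exact div_pos (by linarith) hKpos
      have := key _ hs' (min_le_left _ _)
      have hle : min 1 (-c / K) * K ≤ (-c / K) * K :=
        mul_le_mul_of_nonneg_right (min_le_right _ _) hK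
      rw [div_mul_cancel₀ _ (ne_of_gt hKpos)] at hle
      nlinarith
  have hexp2 : ∑ x, (v x - w x) ^ 2
      = ∑ x, (z x - w x) ^ 2 + ∑ x, (z x - v x) ^ 2 + 2 * c := by
    rw [hc, Finset.mul_sum, ← Finset.sum_add_distrib, ← Finset.sum_add_distrib]
    exact Finset.sum_congr rfl fun x _ => by ring
  have hzv : (0:ℝ) ≤ ∑ x, (z x - v x) ^ 2 := by positivity
  linarith

lemma simplex_dist_le_two {𝒳 : Type*} [Fintype 𝒳] {a b : 𝒳 → ℝ}
    (ha : a ∈ simplex 𝒳) (hb : b ∈ simplex 𝒳) :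
    ∑ x, (a x - b x) ^ 2 ≤ 2 := by
  have hsq : ∀ d : 𝒳 → ℝ, d ∈ simplex 𝒳 → ∑ x, (d x) ^ 2 ≤ 1 := by
    intro d hd
    calc ∑ x, (d x) ^ 2 ≤ ∑ x, d x := by
          apply Finset.sum_le_sum
          intro x _
          have h1 : d x ≤ 1 := by
            have := Finset.single_le_sum (f := d) (fun y _ => hd.1 y) (Finset.mem_univ x)
            rw [hd.2] at this; exact this
          nlinarith [hd.1 x]
      _ = 1 := hd.2
  have hab : (0:ℝ) ≤ ∑ x, a x * b x :=
    Finset.sum_nonneg fun x _ => mul_nonneg (ha.1 x) (hb.1 x)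
  have hexp : ∑ x, (a x - b x) ^ 2
      = ∑ x, (a x) ^ 2 + ∑ x, (b x) ^ 2 - 2 * ∑ x, a x * b x := by
    rw [Finset.mul_sum, ← Finset.sum_add_distrib, ← Finset.sum_sub_distrib]
    exact Finset.sum_congr rfl fun x _ => by ring
  have := hsq a ha
  have := hsq b hb
  linarith

lemma sum_one_div_sqrt_le (n : ℕ) :
    ∑ t ∈ Finset.Icc 1 n, (1 / Real.sqrt t) ≤ 2 * Real.sqrt n := by
  induction n with
  | zero => simp
  | succ n ih =>
    rw [Finset.sum_Icc_succ_top (by omega)]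
    have h1 : Real.sqrt n ≤ Real.sqrt (n+1) := by
      apply Real.sqrt_le_sqrt; push_cast; linarith
    have h2 : 0 < Real.sqrt ((n:ℝ)+1) := by positivity
    have h3 : Real.sqrt ((n:ℝ)+1) * Real.sqrt ((n:ℝ)+1) = (n:ℝ)+1 :=
      Real.mul_self_sqrt (by positivity)
    have h4 : Real.sqrt (n:ℝ) * Real.sqrt (n:ℝ) = (n:ℝ) :=
      Real.mul_self_sqrt (by positivity)
    have key : 1 / Real.sqrt ((n:ℝ)+1) ≤ 2 * (Real.sqrt ((n:ℝ)+1) - Real.sqrt (n:ℝ)) := by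
      rw [div_le_iff₀ h2]
      nlinarith [Real.sqrt_nonneg (n:ℝ)]
    push_cast
    linarith

/-- count of occurrences of `x` among `X 1, …, X n`, as a real number. -/
def Nx {𝒳 : Type*} [DecidableEq 𝒳] (X : ℕ → 𝒳) (n : ℕ) (x : 𝒳) : ℝ :=
  ∑ t ∈ Finset.Icc 1 n, if X t = x then (1:ℝ) else 0

lemma sum_comp_eq_sum_count {𝒳 : Type*} [Fintype 𝒳] [DecidableEq 𝒳]
    (X : ℕ → 𝒳) (n : ℕ) (f : 𝒳 → ℝ) :
    ∑ t ∈ Finset.Icc 1 n, f (X t) = ∑ x, Nx X n x * f x := by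
  unfold Nx
  have h1 : ∀ t, f (X t) = ∑ x, if X t = x then f x else 0 := by
    intro t
    rw [Finset.sum_ite_eq]
    simp
  calc ∑ t ∈ Finset.Icc 1 n, f (X t) = ∑ t ∈ Finset.Icc 1 n, ∑ x, if X t = x then f x else 0 :=
        Finset.sum_congr rfl fun t _ => h1 t
    _ = ∑ x, ∑ t ∈ Finset.Icc 1 n, if X t = x then f x else 0 := Finset.sum_comm
    _ = ∑ x, (∑ t ∈ Finset.Icc 1 n, if X t = x then (1:ℝ) else 0) * f x := by
        refine Finset.sum_congr rfl fun x _ => ?_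
        rw [Finset.sum_mul]
        refine Finset.sum_congr rfl fun t _ => ?_
        by_cases h : X t = x <;> simp [h]



set_option maxHeartbeats 1600000 in
/-- a deterministic guarantee for the projected online gradient
descent iterates: the squared average of `q_t(X_t)/p(X_t) − 1` is within
`C/√n` of the squared chi-squared divergence of the empirical distribution
from `P`, for a constant `C` depending only on `m` and `C_P`. -/
theorem stmt_17
    {𝒳 : Type*} [Fintype 𝒳] [Nonempty 𝒳] [DecidableEq 𝒳]
    (m : ℕ) (hm : m = Fintype.card 𝒳)
    (p : 𝒳 → ℝ) (hp_pos : ∀ x, 0 < p x) (hp_sum : ∑ x, p x = 1)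
    (CP : ℝ) (hCP : CP = 1 / (Finset.univ.inf' Finset.univ_nonempty p) - 1) :
    ∃ C : ℝ,
      ∀ (X : ℕ → 𝒳) (q : ℕ → 𝒳 → ℝ),
        (∀ x, q 1 x = 1 / (m : ℝ)) →
        (∀ t : ℕ, 2 ≤ t → IsSimplexProj
          (fun x => q (t - 1) x +
            Real.sqrt ((m : ℝ) / t) *
              ((if x = X (t - 1) then (1 : ℝ) else 0) / (CP * p (X (t - 1)))))
          (q t)) →
        ∀ n : ℕ,
          ((1 / (n : ℝ)) * (∑ t ∈ Finset.Icc 1 n, q t (X t) / p (X t)) - 1) ^ 2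
            ≥ (∑ x : 𝒳,
                ((∑ t ∈ Finset.Icc 1 n, if X t = x then (1 : ℝ) else 0) / n) *
                  ((∑ t ∈ Finset.Icc 1 n, if X t = x then (1 : ℝ) else 0) /
                    ((n : ℝ) * p x) - 1)) ^ 2
              - C / Real.sqrt n := by
  have hcard : 0 < Fintype.card 𝒳 := Fintype.card_pos
  have hm1 : 1 ≤ m := by omega
  have hmR : (1:ℝ) ≤ m := by exact_mod_cast hm1
  set pmin := Finset.univ.inf' Finset.univ_nonempty p with hpmin
  have hpmin_pos : 0 < pmin := (Finset.lt_inf'_iff _).mpr fun x _ => hp_pos x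
  have hpmin_le : ∀ x, pmin ≤ p x := fun x => Finset.inf'_le _ (Finset.mem_univ x)
  by_cases hone : Fintype.card 𝒳 = 1
  · -- degenerate case: singleton space
    obtain ⟨x₀, hx₀⟩ := Fintype.card_eq_one_iff.mp hone
    have hm' : m = 1 := by omega
    have hp1 : ∀ x, p x = 1 := by
      intro x
      have huniv : (Finset.univ : Finset 𝒳) = {x} := by
        apply Finset.eq_singleton_iff_unique_mem.mpr
        exact ⟨Finset.mem_univ x, fun y _ => (hx₀ y).trans (hx₀ x).symm⟩
      rw [huniv, Finset.sum_singleton] at hp_sum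
      exact hp_sum
    refine ⟨0, ?_⟩
    intro X q hq1 hproj n
    have huniv : ∀ y : 𝒳, (Finset.univ : Finset 𝒳) = {y} := by
      intro y
      apply Finset.eq_singleton_iff_unique_mem.mpr
      exact ⟨Finset.mem_univ y, fun z _ => (hx₀ z).trans (hx₀ y).symm⟩
    have hq_one : ∀ t, 1 ≤ t → ∀ y, q t y = 1 := by
      intro t ht y
      rcases eq_or_lt_of_le ht with h | h
      · rw [← h, hq1 y, hm']; norm_num
      · have hs := (hproj t (by omega)).1
        have := hs.2
        rw [huniv y, Finset.sum_singleton] at this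
        have hyy : ∀ z : 𝒳, z = y := fun z => (hx₀ z).trans (hx₀ y).symm
        exact this
    rcases Nat.eq_zero_or_pos n with rfl | hn
    · norm_num
    · have hnR : (0:ℝ) < n := by exact_mod_cast hn
      have hsum1 : ∑ t ∈ Finset.Icc 1 n, q t (X t) / p (X t) = n := by
        have h : ∑ t ∈ Finset.Icc 1 n, q t (X t) / p (X t) = ∑ _t ∈ Finset.Icc 1 n, (1:ℝ)/1 :=
          Finset.sum_congr rfl fun t ht => by
            rw [hq_one t (Finset.mem_Icc.mp ht).1, hp1]
        rw [h, Finset.sum_const, Nat.card_Icc]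
        simp
      have hsum2 : ∀ x, (∑ t ∈ Finset.Icc 1 n, if X t = x then (1:ℝ) else 0) = n := by
        intro x
        have h : (∑ t ∈ Finset.Icc 1 n, if X t = x then (1:ℝ) else 0) = ∑ _t ∈ Finset.Icc 1 n, (1:ℝ) :=
          Finset.sum_congr rfl fun t _ => by simp [(hx₀ (X t)).trans (hx₀ x).symm]
        rw [h, Finset.sum_const, Nat.card_Icc]
        simp
      rw [hsum1]
      have hB : (∑ x : 𝒳,
          ((∑ t ∈ Finset.Icc 1 n, if X t = x then (1 : ℝ) else 0) / n) *
            ((∑ t ∈ Finset.Icc 1 n, if X t = x then (1 : ℝ) else 0) /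
              ((n : ℝ) * p x) - 1)) = 0 := by
        apply Finset.sum_eq_zero
        intro x _
        rw [hsum2 x, hp1]
        field_simp
        norm_num
      rw [hB]
      have : (1 / (n:ℝ)) * n - 1 = 0 := by field_simp; norm_num
      rw [this]
      simp
  · -- main case
    have hcard2 : 2 ≤ Fintype.card 𝒳 := by omega
    have hn1R : (1:ℝ) < m ∨ True := Or.inr trivial
    have hpmin_half : 2 * pmin ≤ 1 := by
      have h := Finset.card_nsmul_le_sum Finset.univ p pmin (fun x _ => hpmin_le x)
      rw [hp_sum] at h
      have h2 : (Fintype.card 𝒳 : ℝ) * pmin ≤ 1 := by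
        simpa [nsmul_eq_mul, Finset.card_univ] using h
      have h3 : (2:ℝ) ≤ (Fintype.card 𝒳 : ℝ) := by exact_mod_cast hcard2
      nlinarith [hpmin_pos]
    have hCPpos : 0 < CP := by
      rw [hCP]
      have h1 : 1 < 1 / pmin := by
        rw [lt_div_iff₀ hpmin_pos]; linarith
      linarith
    have hdivmono : ∀ u v d : ℝ, 0 < d → u ≤ v → u/d ≤ v/d := by
      intro u v d hd h
      rw [div_le_div_iff₀ hd hd]
      nlinarith
    set G2 : ℝ := (1 / (CP * pmin))^2 with hG2
    have hG2pos : 0 < G2 := by positivity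
    set K : ℝ := Real.sqrt 2 + G2 * Real.sqrt m with hKdef
    have hKpos : 0 < K := by positivity
    refine ⟨CP * K * (2 / pmin), ?_⟩
    intro X q hq1 hproj n
    rcases Nat.eq_zero_or_pos n with rfl | hn
    · have he : Finset.Icc 1 0 = (∅ : Finset ℕ) := by simp
      simp [he]
    have hnR : (0:ℝ) < n := by exact_mod_cast hn
    have hnR1 : (1:ℝ) ≤ n := by exact_mod_cast hn
    have hmpos : (0:ℝ) < m := by linarith
    set w : 𝒳 → ℝ := fun x => Nx X n x / n with hwdef
    have hNx_nonneg : ∀ x, 0 ≤ Nx X n x := fun x =>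
      Finset.sum_nonneg fun t _ => by positivity
    have hNx_le : ∀ x, Nx X n x ≤ n := by
      intro x
      calc Nx X n x ≤ ∑ t ∈ Finset.Icc 1 n, (1:ℝ) :=
            Finset.sum_le_sum fun t _ => by split <;> norm_num
        _ = n := by rw [Finset.sum_const, Nat.card_Icc]; simp
    have hNx_sum : ∑ x, Nx X n x = n := by
      have h := sum_comp_eq_sum_count X n (fun _ => (1:ℝ))
      simp only [mul_one] at h
      rw [← h, Finset.sum_const, Nat.card_Icc]
      simp
    have hw_simplex : w ∈ simplex 𝒳 := by
      constructor
      · intro x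
        show 0 ≤ Nx X n x / n
        exact div_nonneg (hNx_nonneg x) hnR.le
      · show ∑ x, Nx X n x / (n:ℝ) = 1
        rw [← Finset.sum_div, hNx_sum]
        field_simp
    have hq_simplex : ∀ t, 1 ≤ t → q t ∈ simplex 𝒳 := by
      intro t ht
      rcases eq_or_lt_of_le ht with h | h
      · subst h
        constructor
        · intro x; rw [hq1 x]; positivity
        · have h2 : ∑ x, q 1 x = ∑ _x : 𝒳, (1:ℝ)/m :=
            Finset.sum_congr rfl fun x _ => hq1 x
          rw [h2, Finset.sum_const, Finset.card_univ, ← hm, nsmul_eq_mul]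
          field_simp
      · exact (hproj t (by omega)).1
    set η : ℕ → ℝ := fun s => Real.sqrt ((m:ℝ) / (s+1)) with hηdef
    set g : ℕ → 𝒳 → ℝ := fun s x => (if x = X s then (1:ℝ) else 0) / (CP * p (X s)) with hgdef
    set a : ℕ → ℝ := fun t => ∑ x, (q t x - w x)^2 with hadef
    have hηpos : ∀ s : ℕ, 0 < η s := by
      intro s
      rw [hηdef]
      apply Real.sqrt_pos.mpr
      have : (0:ℝ) < (s:ℝ) + 1 := by positivity
      exact div_pos hmpos this
    have hηmono : ∀ s : ℕ, η (s+1) ≤ η s := by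
      intro s
      rw [hηdef]
      apply Real.sqrt_le_sqrt
      rw [div_le_div_iff₀ (by push_cast; positivity) (by positivity)]
      push_cast
      nlinarith
    have ha_le2 : ∀ t, 1 ≤ t → a t ≤ 2 := fun t ht =>
      simplex_dist_le_two (hq_simplex t ht) hw_simplex
    have ha_nonneg : ∀ t, 0 ≤ a t := fun t => by
      rw [hadef]; positivity
    have hgsq : ∀ s : ℕ, ∑ x, (g s x)^2 ≤ G2 := by
      intro s
      have hps := hp_pos (X s)
      have h1 : ∑ x, (g s x)^2 = (1/(CP * p (X s)))^2 := by
        rw [hgdef]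
        have h2 : ∀ x : 𝒳, ((if x = X s then (1:ℝ) else 0) / (CP * p (X s)))^2
            = if x = X s then (1/(CP * p (X s)))^2 else 0 := by
          intro x; split <;> simp
        rw [Finset.sum_congr rfl fun x _ => h2 x, Finset.sum_ite_eq' Finset.univ (X s)]
        simp
      rw [h1, hG2]
      apply pow_le_pow_left₀ (by positivity)
      apply one_div_le_one_div_of_le (by positivity)
      exact mul_le_mul_of_nonneg_left (hpmin_le _) hCPpos.le
    have hstep : ∀ s : ℕ, 1 ≤ s →
        w (X s) / p (X s) / CP - q s (X s) / p (X s) / CP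
          ≤ (a s - a (s+1)) / (2 * η s) + η s * G2 / 2 := by
      intro s hs
      have hp' := hproj (s+1) (by omega)
      simp only [Nat.add_sub_cancel] at hp'
      have hcast : ((s+1 : ℕ):ℝ) = (s:ℝ) + 1 := by push_cast; ring
      rw [hcast] at hp'
      have h2 : a (s+1) ≤ ∑ x, ((q s x + η s * g s x) - w x)^2 :=
        proj_nonexpansive hp' hw_simplex
      have h3 : ∑ x, ((q s x + η s * g s x) - w x)^2
          = a s + 2 * η s * ((∑ x, g s x * q s x) - (∑ x, g s x * w x))
            + (η s)^2 * ∑ x, (g s x)^2 := by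
        rw [hadef, ← Finset.sum_sub_distrib, Finset.mul_sum, Finset.mul_sum,
          ← Finset.sum_add_distrib, ← Finset.sum_add_distrib]
        exact Finset.sum_congr rfl fun x _ => by ring
      have hps := hp_pos (X s)
      have hdd : ∀ u c d : ℝ, u / (c * d) = u / d / c := by
        intro u c d; rw [div_div, mul_comm]
      have hgq : (∑ x, g s x * q s x) = q s (X s) / p (X s) / CP := by
        rw [hgdef]
        have h4 : ∀ x : 𝒳, (if x = X s then (1:ℝ) else 0) / (CP * p (X s)) * q s x
            = if x = X s then q s x / (CP * p (X s)) else 0 := by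
          intro x; split <;> simp <;> ring
        rw [Finset.sum_congr rfl fun x _ => h4 x, Finset.sum_ite_eq' Finset.univ (X s)]
        simp only [Finset.mem_univ, if_true]
        exact hdd _ _ _
      have hgw : (∑ x, g s x * w x) = w (X s) / p (X s) / CP := by
        rw [hgdef]
        have h4 : ∀ x : 𝒳, (if x = X s then (1:ℝ) else 0) / (CP * p (X s)) * w x
            = if x = X s then w x / (CP * p (X s)) else 0 := by
          intro x; split <;> simp <;> ring
        rw [Finset.sum_congr rfl fun x _ => h4 x, Finset.sum_ite_eq' Finset.univ (X s)]
        simp only [Finset.mem_univ, if_true]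
        exact hdd _ _ _
      rw [hgq, hgw] at h3
      rw [h3] at h2
      have hη := hηpos s
      have hrw : (a s - a (s+1))/(2*η s) + η s * G2/2
          = (a s - a (s+1) + (η s)^2 * G2)/(2*η s) := by
        field_simp
      rw [hrw, le_div_iff₀ (by positivity)]
      have hb : (η s)^2 * (∑ x, (g s x)^2) ≤ (η s)^2 * G2 :=
        mul_le_mul_of_nonneg_left (hgsq s) (by positivity)
      linarith [h2, hb]
    have hreg : ∀ N : ℕ, 1 ≤ N →
        ∑ s ∈ Finset.Icc 1 N, (w (X s) / p (X s) / CP - q s (X s) / p (X s) / CP)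
          ≤ (2 - a (N+1)) / (2 * η N) + (G2/2) * ∑ s ∈ Finset.Icc 1 N, η s := by
      intro N hN
      induction N, hN using Nat.le_induction with
      | base =>
        rw [Finset.Icc_self, Finset.sum_singleton, Finset.sum_singleton]
        have h := hstep 1 le_rfl
        have h2 : (a 1 - a (1+1))/(2*η 1) ≤ (2 - a (1+1))/(2*η 1) :=
          hdivmono _ _ _ (by linarith [hηpos 1]) (by linarith [ha_le2 1 le_rfl])
        linarith
      | succ N hN ih =>
        rw [Finset.sum_Icc_succ_top (by omega), Finset.sum_Icc_succ_top (by omega)]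
        have h := hstep (N+1) (by omega)
        have hd1 : 0 < 2 * η (N+1) := by linarith [hηpos (N+1)]
        have hd2 : 2 * η (N+1) ≤ 2 * η N := by linarith [hηmono N]
        have h1 : 1/(2*η N) ≤ 1/(2*η (N+1)) := one_div_le_one_div_of_le hd1 hd2
        have h2 : 0 ≤ 2 - a (N+1) := by linarith [ha_le2 (N+1) (by omega)]
        have hmono2 : (2 - a (N+1))/(2*η N) ≤ (2 - a (N+1))/(2*η (N+1)) := by
          calc (2 - a (N+1))/(2*η N) = (2 - a (N+1)) * (1/(2*η N)) := by ring
            _ ≤ (2 - a (N+1)) * (1/(2*η (N+1))) := mul_le_mul_of_nonneg_left h1 h2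
            _ = (2 - a (N+1))/(2*η (N+1)) := by ring
        have htel : (2 - a (N+1))/(2*η (N+1)) + (a (N+1) - a (N+1+1))/(2*η (N+1))
            = (2 - a (N+1+1))/(2*η (N+1)) := by
          rw [← add_div]
          ring_nf
        linarith
    have hsqn : Real.sqrt n * Real.sqrt n = n := Real.mul_self_sqrt hnR.le
    have hsqn_pos : 0 < Real.sqrt n := Real.sqrt_pos.mpr hnR
    have hηsum : ∑ s ∈ Finset.Icc 1 n, η s ≤ Real.sqrt m * (2 * Real.sqrt n) := by
      calc ∑ s ∈ Finset.Icc 1 n, η s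
          ≤ ∑ s ∈ Finset.Icc 1 n, Real.sqrt m * (1/Real.sqrt s) := by
            apply Finset.sum_le_sum
            intro s hs
            have hs1 : 1 ≤ s := (Finset.mem_Icc.mp hs).1
            have hs1R : (1:ℝ) ≤ s := by exact_mod_cast hs1
            rw [hηdef]
            have hle : Real.sqrt ((m:ℝ)/(s+1)) ≤ Real.sqrt ((m:ℝ)/s) := by
              apply Real.sqrt_le_sqrt
              rw [div_le_div_iff₀ (by linarith) (by linarith)]
              nlinarith
            refine hle.trans (le_of_eq ?_)
            rw [Real.sqrt_div (by positivity : (0:ℝ) ≤ (m:ℝ))]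
            ring
        _ = Real.sqrt m * ∑ s ∈ Finset.Icc 1 n, (1/Real.sqrt s) := by rw [Finset.mul_sum]
        _ ≤ Real.sqrt m * (2 * Real.sqrt n) :=
            mul_le_mul_of_nonneg_left (sum_one_div_sqrt_le n) (Real.sqrt_nonneg _)
    have hηinv : (2 - a (n+1))/(2*η n) ≤ Real.sqrt 2 * Real.sqrt n := by
      have hηn := hηpos n
      have h1 : (2 - a (n+1))/(2*η n) ≤ 2/(2*η n) :=
        hdivmono _ _ _ (by linarith [hηpos n]) (by linarith [ha_nonneg (n+1)])
      have h2 : 2/(2*η n) = 1/η n := by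
        field_simp
      have h3 : 1/η n = Real.sqrt (((n:ℝ)+1)/m) := by
        rw [hηdef, one_div, ← Real.sqrt_inv, inv_div]
      have h4 : Real.sqrt (((n:ℝ)+1)/m) ≤ Real.sqrt ((n:ℝ)+1) :=
        Real.sqrt_le_sqrt (div_le_self (by linarith) hmR)
      have h5 : Real.sqrt ((n:ℝ)+1) ≤ Real.sqrt (2*n) :=
        Real.sqrt_le_sqrt (by linarith)
      have h6 : Real.sqrt (2*(n:ℝ)) = Real.sqrt 2 * Real.sqrt n :=
        Real.sqrt_mul (by norm_num) _
      linarith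
    have hregn := hreg n hn
    have hregK : ∑ s ∈ Finset.Icc 1 n, (w (X s)/p (X s)/CP - q s (X s)/p (X s)/CP)
        ≤ K * Real.sqrt n := by
      have hrhs := mul_le_mul_of_nonneg_left hηsum (le_of_lt (half_pos hG2pos))
      have heq : Real.sqrt 2 * Real.sqrt n + G2/2*(Real.sqrt m * (2*Real.sqrt n))
          = K * Real.sqrt n := by
        rw [hKdef]; ring
      linarith
    set SQ := ∑ t ∈ Finset.Icc 1 n, q t (X t)/p (X t) with hSQdef
    set SB := ∑ t ∈ Finset.Icc 1 n, w (X t)/p (X t) with hSBdef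
    have hsplit : ∑ s ∈ Finset.Icc 1 n, (w (X s)/p (X s)/CP - q s (X s)/p (X s)/CP)
        = SB/CP - SQ/CP := by
      rw [hSBdef, hSQdef, Finset.sum_div, Finset.sum_div, ← Finset.sum_sub_distrib]
    have hdiff : SB - SQ ≤ CP * (K * Real.sqrt n) := by
      rw [hsplit] at hregK
      rw [div_sub_div_same] at hregK
      exact ((div_le_iff₀ hCPpos).mp hregK).trans_eq (by ring)
    have hSB : SB = ∑ x, Nx X n x * (w x / p x) :=
      sum_comp_eq_sum_count X n (fun x => w x / p x)
    have hBeq : (∑ x : 𝒳,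
          ((∑ t ∈ Finset.Icc 1 n, if X t = x then (1 : ℝ) else 0) / n) *
            ((∑ t ∈ Finset.Icc 1 n, if X t = x then (1 : ℝ) else 0) /
              ((n : ℝ) * p x) - 1)) = SB/(n:ℝ) - 1 := by
      rw [hSB]
      have h1 : ∀ x : 𝒳,
          ((∑ t ∈ Finset.Icc 1 n, if X t = x then (1 : ℝ) else 0) / n) *
            ((∑ t ∈ Finset.Icc 1 n, if X t = x then (1 : ℝ) else 0) /
              ((n : ℝ) * p x) - 1)
          = Nx X n x * (w x / p x)/(n:ℝ) - Nx X n x/(n:ℝ) := by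
        intro x
        have hpx := hp_pos x
        show Nx X n x / n * (Nx X n x / ((n:ℝ) * p x) - 1)
            = Nx X n x * ((Nx X n x / n) / p x)/(n:ℝ) - Nx X n x/(n:ℝ)
        field_simp
      calc ∑ x : 𝒳, ((∑ t ∈ Finset.Icc 1 n, if X t = x then (1 : ℝ) else 0) / n) *
            ((∑ t ∈ Finset.Icc 1 n, if X t = x then (1 : ℝ) else 0) / ((n : ℝ) * p x) - 1)
          = ∑ x, (Nx X n x * (w x / p x)/(n:ℝ) - Nx X n x/(n:ℝ)) :=
            Finset.sum_congr rfl fun x _ => h1 x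
        _ = (∑ x, Nx X n x * (w x / p x))/(n:ℝ) - (∑ x, Nx X n x)/(n:ℝ) := by
            rw [Finset.sum_sub_distrib, Finset.sum_div, Finset.sum_div]
        _ = (∑ x, Nx X n x * (w x / p x))/(n:ℝ) - 1 := by
            rw [hNx_sum]; field_simp
    set B := ∑ x : 𝒳,
        ((∑ t ∈ Finset.Icc 1 n, if X t = x then (1 : ℝ) else 0) / n) *
          ((∑ t ∈ Finset.Icc 1 n, if X t = x then (1 : ℝ) else 0) /
            ((n : ℝ) * p x) - 1) with hBdef
    have hB0 : 0 ≤ B := by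
      have h2 : ∀ x : 𝒳, p x * (w x/p x - 1)^2
          = Nx X n x * (w x / p x)/(n:ℝ) - 2*(Nx X n x/(n:ℝ)) + p x := by
        intro x
        have hpx := hp_pos x
        show p x * ((Nx X n x / n)/p x - 1)^2
            = Nx X n x * ((Nx X n x / n) / p x)/(n:ℝ) - 2*(Nx X n x/(n:ℝ)) + p x
        field_simp
        ring
      have hid : ∑ x, p x * (w x/p x - 1)^2 = SB/(n:ℝ) - 1 := by
        rw [hSB]
        calc ∑ x, p x * (w x/p x - 1)^2
            = ∑ x, (Nx X n x * (w x / p x)/(n:ℝ) - 2*(Nx X n x/(n:ℝ)) + p x) :=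
              Finset.sum_congr rfl fun x _ => h2 x
          _ = ((∑ x, Nx X n x * (w x / p x))/(n:ℝ) - 2*((∑ x, Nx X n x)/(n:ℝ)))
                + ∑ x, p x := by
              rw [Finset.sum_add_distrib, Finset.sum_sub_distrib, Finset.sum_div]
              congr 1
              congr 1
              rw [← Finset.mul_sum, Finset.sum_div]
          _ = (∑ x, Nx X n x * (w x / p x))/(n:ℝ) - 1 := by
              rw [hNx_sum, hp_sum]
              field_simp
              ring
      have hpos : 0 ≤ ∑ x, p x * (w x/p x - 1)^2 :=
        Finset.sum_nonneg fun x _ => mul_nonneg (hp_pos x).le (sq_nonneg _)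
      rw [hBeq, ← hid]
      exact hpos
    have hSQ0 : 0 ≤ SQ := by
      rw [hSQdef]
      exact Finset.sum_nonneg fun t ht =>
        div_nonneg ((hq_simplex t (Finset.mem_Icc.mp ht).1).1 (X t)) (hp_pos _).le
    have hq_le_one : ∀ t, 1 ≤ t → q t (X t) ≤ 1 := by
      intro t ht
      have hq := hq_simplex t ht
      have := Finset.single_le_sum (f := q t) (fun y _ => hq.1 y) (Finset.mem_univ (X t))
      rw [hq.2] at this
      exact this
    have hSQub : SQ ≤ (n:ℝ)/pmin := by
      rw [hSQdef]
      calc ∑ t ∈ Finset.Icc 1 n, q t (X t)/p (X t)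
          ≤ ∑ t ∈ Finset.Icc 1 n, 1/pmin := by
            apply Finset.sum_le_sum
            intro t ht
            exact div_le_div₀ (by positivity) (hq_le_one t (Finset.mem_Icc.mp ht).1)
              hpmin_pos (hpmin_le _)
        _ = (n:ℝ)/pmin := by
            rw [Finset.sum_const, Nat.card_Icc, nsmul_eq_mul]
            simp
            ring
    have hSBub : SB ≤ (n:ℝ)/pmin := by
      rw [hSB]
      calc ∑ x, Nx X n x * (w x/p x) ≤ ∑ x, Nx X n x * (1/pmin) := by
            apply Finset.sum_le_sum
            intro x _
            apply mul_le_mul_of_nonneg_left ?_ (hNx_nonneg x)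
            apply div_le_div₀ (by positivity) ?_ hpmin_pos (hpmin_le x)
            show Nx X n x / (n:ℝ) ≤ 1
            rw [div_le_one hnR]
            exact hNx_le x
        _ = (∑ x, Nx X n x) * (1/pmin) := by rw [Finset.sum_mul]
        _ = (n:ℝ)/pmin := by rw [hNx_sum]; ring
    have hBub : B ≤ 1/pmin - 1 := by
      rw [hBeq]
      have h1 : SB/(n:ℝ) ≤ ((n:ℝ)/pmin)/(n:ℝ) := hdivmono _ _ _ hnR hSBub
      have h2 : ((n:ℝ)/pmin)/(n:ℝ) = 1/pmin := by
        field_simp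
      linarith
    have hAB : B - (1/(n:ℝ) * SQ - 1) ≤ CP*K/Real.sqrt n := by
      have h1 : B - (1/(n:ℝ)*SQ - 1) = (SB - SQ)/n := by
        rw [hBeq]
        field_simp
        ring
      rw [h1]
      have h2 : (SB - SQ)/(n:ℝ) ≤ (CP*(K*Real.sqrt n))/(n:ℝ) := hdivmono _ _ _ hnR hdiff
      have h3 : (CP*(K*Real.sqrt n))/(n:ℝ) = CP*K/Real.sqrt n := by
        rw [div_eq_div_iff hnR.ne' hsqn_pos.ne']
        linear_combination (CP*K) * hsqn
      linarith
    have hABub : 1/(n:ℝ) * SQ - 1 ≤ 1/pmin - 1 := by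
      have h1 : SQ/(n:ℝ) ≤ ((n:ℝ)/pmin)/(n:ℝ) := hdivmono _ _ _ hnR hSQub
      have h2 : ((n:ℝ)/pmin)/(n:ℝ) = 1/pmin := by field_simp
      have h3 : 1/(n:ℝ) * SQ = SQ/(n:ℝ) := by ring
      linarith
    set AB := 1/(n:ℝ) * SQ - 1 with hABdef
    rw [ge_iff_le]
    have hC : CP*K*(2/pmin)/Real.sqrt n = (CP*K/Real.sqrt n)*(2/pmin) := by ring
    rw [hC]
    set ε := CP*K/Real.sqrt n with hεdef
    have hε : 0 ≤ ε := by positivity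
    have hpm2 : (0:ℝ) ≤ 2/pmin := by positivity
    clear_value ε AB B SQ SB K G2 pmin
    rcases le_or_gt B AB with hle | hlt
    · have hsq2 : B^2 ≤ AB^2 := pow_le_pow_left₀ hB0 hle 2
      linarith [mul_nonneg hε hpm2]
    · have hfac : B^2 - AB^2 = (B + AB)*(B - AB) := by ring
      have hsum_ub : B + AB ≤ 2/pmin := by linarith [show (2:ℝ)/pmin = 2*(1/pmin) from by ring]
      rcases le_or_gt (B + AB) 0 with hneg | hpos
      · have hnn : (B+AB)*(B-AB) ≤ 0 :=
          mul_nonpos_of_nonpos_of_nonneg hneg (by linarith)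
        linarith [mul_nonneg hε hpm2, hfac]
      · have hmm : (B+AB)*(B-AB) ≤ (2/pmin)*ε :=
          mul_le_mul hsum_ub hAB (by linarith) hpm2
        have hcomm : (2/pmin)*ε = ε*(2/pmin) := by ring
        linarith [hfac, hmm, hcomm]
end
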